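/- arXiv:2007.00533 — 4 statements merged into one kernel-verified Lean document; each statement's English description precedes it below -/
import Mathlib

section
/- Let τ > 0, q₁ ≥ 0, q₂ > 0, and define ζ = max(√2·e·q₁/τ, 4e·√(q₂/τ)). Then the infimum over z > 0 of z^(−τ)·exp(q₂(z²−1) + q₁(z−1)) is at most ζ^τ. -/
theorem stmt_6 (τ q₁ q₂ : ℝ) (hτ : 0 < τ) (hq₁ : 0 ≤ q₁) (hq₂ : 0 < q₂) :
    let e := Real.exp 1
    let ζ := max (Real.sqrt 2 * e * q₁ / τ) (4 * e * Real.sqrt (q₂ / τ))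
    ∃ z : ℝ, 0 < z ∧
      z ^ (-τ) * Real.exp (q₂ * (z ^ 2 - 1) + q₁ * (z - 1)) ≤ ζ ^ τ := by
  intro e ζ
  have he : (0:ℝ) < e := Real.exp_pos 1
  set D := Real.sqrt (q₁ ^ 2 + 8 * q₂ * τ) with hDdef
  have hDgt : q₁ < D := by
    have h1 : q₁ = Real.sqrt (q₁ ^ 2) := by rw [Real.sqrt_sq hq₁]
    rw [h1, hDdef]
    exact Real.sqrt_lt_sqrt (by positivity) (by nlinarith)
  set z := (D - q₁) / (4 * q₂) with hzdef
  have hzpos : 0 < z := div_pos (by linarith) (by linarith)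
  have hDsq : D ^ 2 = q₁ ^ 2 + 8 * q₂ * τ := Real.sq_sqrt (by positivity)
  have heq : 2 * q₂ * z ^ 2 + q₁ * z = τ := by
    rw [hzdef]
    field_simp
    nlinarith [hDsq]
  clear_value z D
  have hs2 : (Real.sqrt 2) ^ 2 = 2 := Real.sq_sqrt (by norm_num)
  have hs2pos : 0 < Real.sqrt 2 := Real.sqrt_pos.mpr (by norm_num)
  have hζ : e / z ≤ ζ := by
    rw [div_le_iff₀ hzpos]
    by_contra h
    push_neg at h
    have h1 : (Real.sqrt 2 * e * q₁ / τ) * z < e :=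
      lt_of_le_of_lt (mul_le_mul_of_nonneg_right (le_max_left _ _) hzpos.le) h
    have h2 : (4 * e * Real.sqrt (q₂ / τ)) * z < e :=
      lt_of_le_of_lt (mul_le_mul_of_nonneg_right (le_max_right _ _) hzpos.le) h
    have h1' : Real.sqrt 2 * q₁ * z < τ := by
      rw [div_mul_eq_mul_div, div_lt_iff₀ hτ] at h1
      have : e * (Real.sqrt 2 * q₁ * z) < e * τ := by nlinarith
      exact lt_of_mul_lt_mul_left this he.le
    have h2'' : 4 * Real.sqrt (q₂ / τ) * z < 1 := by
      have : e * (4 * Real.sqrt (q₂ / τ) * z) < e * 1 := by nlinarith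
      exact lt_of_mul_lt_mul_left this he.le
    have h2' : 16 * q₂ * z ^ 2 < τ := by
      have hqnn : 0 ≤ Real.sqrt (q₂ / τ) := Real.sqrt_nonneg _
      have hqsq : (Real.sqrt (q₂ / τ)) ^ 2 = q₂ / τ := Real.sq_sqrt (by positivity)
      have hlt : (4 * Real.sqrt (q₂ / τ) * z) ^ 2 < 1 ^ 2 := by
        apply sq_lt_sq' _ h2''
        nlinarith [mul_nonneg (mul_nonneg (by norm_num : (0:ℝ) ≤ 4) hqnn) hzpos.le]
      have h3 : 16 * (q₂ / τ) * z ^ 2 < 1 := by nlinarith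
      have : 16 * (q₂ / τ) * z ^ 2 * τ < 1 * τ := by nlinarith
      calc 16 * q₂ * z ^ 2 = 16 * (q₂ / τ) * z ^ 2 * τ := by field_simp
        _ < 1 * τ := this
        _ = τ := by ring
    have hq1z : 7 * τ < 8 * (q₁ * z) := by nlinarith
    have hs87 : Real.sqrt 2 < 8 / 7 := by
      have hm := mul_lt_mul_of_pos_left hq1z hs2pos
      have h8 : Real.sqrt 2 * (8 * (q₁ * z)) = 8 * (Real.sqrt 2 * q₁ * z) := by ring
      have h7 : Real.sqrt 2 * (7 * τ) < (8 / 7 : ℝ) * (7 * τ) := by linarith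
      exact lt_of_mul_lt_mul_right h7 (by positivity)
    have hss : Real.sqrt 2 * Real.sqrt 2 < (8/7:ℝ) * (8/7) :=
      mul_lt_mul'' hs87 hs87 hs2pos.le hs2pos.le
    have hms := Real.mul_self_sqrt (by norm_num : (0:ℝ) ≤ 2)
    linarith
  have hexp : Real.exp (q₂ * (z ^ 2 - 1) + q₁ * (z - 1)) ≤ Real.exp τ := by
    apply Real.exp_le_exp.mpr
    nlinarith
  have hstep : z ^ (-τ) * Real.exp (q₂ * (z ^ 2 - 1) + q₁ * (z - 1)) ≤ (e / z) ^ τ := by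
    have hpow : (e / z) ^ τ = z ^ (-τ) * Real.exp τ := by
      rw [Real.div_rpow he.le hzpos.le, Real.rpow_neg hzpos.le, Real.exp_one_rpow]
      ring
    rw [hpow]
    exact mul_le_mul_of_nonneg_left hexp (Real.rpow_nonneg hzpos.le _)
  refine ⟨z, hzpos, hstep.trans ?_⟩
  exact Real.rpow_le_rpow (by positivity) hζ hτ.le
end

section
/- For 0 < q < s ≤ 1, setting p₁₁ = qs, p₁₀ = p₀₁ = q(1−s), p₀₀ = 1−2q+qs and σ² = q(s−q), define T = p₁₁(eᵗ−1)+1 and D = σ²(eᵗ−1) for t > 0. Then the discriminant T² − 4D is strictly positive. -/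
theorem stmt_7 (q s t : ℝ) (hq : 0 < q) (hqs : q < s) (hs : s ≤ 1) (ht : 0 < t) :
    (q * s * (Real.exp t - 1) + 1) ^ 2 - 4 * (q * (s - q) * (Real.exp t - 1)) > 0 := by
  have hE : 0 < Real.exp t - 1 := by
    linarith [Real.add_one_le_exp t, Real.exp_lt_exp.mpr ht, Real.exp_zero]
  nlinarith [sq_nonneg (q * s * (Real.exp t - 1) - 1), mul_pos (mul_pos hq hq) hE]
end

section
/- Let X₀,…,Xₙ be i.i.d. random variables each taking values in {0,1}², with pair distribution P (so Xᵢ = (Aᵢ,Bᵢ) with P(1,1)=p₁₁, covariance σ² = p₁₁ − (p₁₁+p₀₁)² possibly nonzero), and let W = ∑_{i=0}^{n} AᵢB_{i+1 mod (n+1)}. Suppose T = p₁₁(eᵗ−1)+1 and D = σ²(eᵗ−1) satisfy T² − 4D > 0 and let α,β = (T ± √(T²−4D))/2. Then E[e^{tW}] = α^{n+1} + β^{n+1}. -/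
open MeasureTheory ProbabilityTheory Finset


def pathFn {S : Type*} {k : ℕ} (s s' : S) (g : Fin k → S) : Fin (k+2) → S :=
  Fin.cons s (Fin.snoc g s')

lemma pathFn_zero {S : Type*} {k : ℕ} (s s' : S) (g : Fin k → S) :
    pathFn s s' g 0 = s := rfl

lemma pathFn_succ {S : Type*} {k : ℕ} (s s' : S) (u : S) (g : Fin k → S) (j : Fin (k+2)) :
    pathFn s s' (Fin.cons u g) j.succ = pathFn u s' g j := by
  show (Fin.cons s (Fin.snoc (Fin.cons u g) s') : Fin (k+3) → S) j.succ = _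
  rw [Fin.cons_succ, ← Fin.cons_snoc_eq_snoc_cons]
  rfl

lemma aux_pow_entry {S : Type*} [Fintype S] [DecidableEq S] (M : Matrix S S ℝ) :
    ∀ (k : ℕ) (s s' : S), (M ^ (k+1)) s s' =
      ∑ g : Fin k → S, ∏ i : Fin (k+1), M (pathFn s s' g i.castSucc) (pathFn s s' g i.succ) := by
  intro k
  induction k with
  | zero =>
    intro s s'
    rw [pow_one, Fintype.sum_unique, Fin.prod_univ_one]
    rfl
  | succ k ih =>
    intro s s'
    have h1 : (M ^ (k+2)) s s' = ∑ u : S, M s u * (M ^ (k+1)) u s' := by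
      rw [pow_succ' M (k+1), Matrix.mul_apply]
    rw [h1]
    rw [← Equiv.sum_comp (Fin.consEquiv (fun _ : Fin (k+1) => S))]
    rw [Fintype.sum_prod_type]
    refine Finset.sum_congr rfl fun u _ => ?_
    rw [ih u s', Finset.mul_sum]
    refine Finset.sum_congr rfl fun g _ => ?_
    have hc : ((Fin.consEquiv (fun _ : Fin (k+1) => S)) (u, g) : Fin (k+1) → S)
        = Fin.cons u g := rfl
    rw [hc]
    conv_rhs => rw [Fin.prod_univ_succ]
    have h0 : pathFn s s' (Fin.cons u g) ((0 : Fin (k+2)).castSucc) = s := rfl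
    have h1' : pathFn s s' (Fin.cons u g) ((0 : Fin (k+2)).succ) = u := by
      rw [pathFn_succ]; rfl
    rw [h0, h1']
    congr 1
    refine Finset.prod_congr rfl fun i _ => ?_
    congr 1
    · rw [← Fin.succ_castSucc, pathFn_succ]
    · rw [pathFn_succ]

lemma aux_cyclic_trace {S : Type*} [Fintype S] [DecidableEq S] (M : Matrix S S ℝ) (m : ℕ) :
    ∑ x : Fin (m+1) → S, ∏ i : Fin (m+1), M (x i) (x (i+1)) = Matrix.trace (M ^ (m+1)) := by
  rw [Matrix.trace, ← Equiv.sum_comp (Fin.consEquiv (fun _ : Fin (m+1) => S)),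
    Fintype.sum_prod_type]
  refine Finset.sum_congr rfl fun s _ => ?_
  rw [Matrix.diag, aux_pow_entry M m s s]
  refine Finset.sum_congr rfl fun g _ => ?_
  have hc : ∀ g : Fin m → S, ((Fin.consEquiv (fun _ : Fin (m+1) => S)) (s, g) : Fin (m+1) → S)
      = Fin.cons s g := fun _ => rfl
  rw [hc]
  have claim1 : ∀ j : Fin (m+1), (Fin.cons s g : Fin (m+1) → S) j = pathFn s s g j.castSucc := by
    intro j
    refine Fin.cases ?_ ?_ j
    · rfl
    · intro j'
      show g j' = pathFn s s g j'.succ.castSucc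
      rw [← Fin.succ_castSucc]
      show g j' = (Fin.cons s (Fin.snoc g s) : Fin (m+2) → S) j'.castSucc.succ
      rw [Fin.cons_succ, Fin.snoc_castSucc]
  have claim2 : ∀ i : Fin (m+1), (Fin.cons s g : Fin (m+1) → S) (i+1) = pathFn s s g i.succ := by
    intro i
    refine Fin.lastCases ?_ ?_ i
    · rw [Fin.last_add_one]
      show s = pathFn s s g (Fin.last m).succ
      have h2 : (Fin.last m).succ = (Fin.last (m+1)) := rfl
      have h3 : (Fin.last (m+1)) = (Fin.last m).succ := rfl
      show s = (Fin.cons s (Fin.snoc g s) : Fin (m+2) → S) (Fin.last m).succ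
      rw [Fin.cons_succ, Fin.snoc_last]
    · intro j
      rw [Fin.coeSucc_eq_succ, Fin.succ_castSucc, ← claim1 j.succ]
  exact Finset.prod_congr rfl fun i _ => by rw [claim1 i, claim2 i]


lemma aux_trace_pow (M : Matrix Bool Bool ℝ) (α β : ℝ)
    (hCH : M * M = (α + β) • M - (α * β) • (1 : Matrix Bool Bool ℝ))
    (htr : Matrix.trace M = α + β) :
    ∀ m : ℕ, Matrix.trace (M ^ m) = α ^ m + β ^ m := by
  have key : ∀ m, Matrix.trace (M ^ m) = α ^ m + β ^ m ∧
      Matrix.trace (M ^ (m+1)) = α ^ (m+1) + β ^ (m+1) := by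
    intro m
    induction m with
    | zero =>
      constructor
      · simp [Matrix.trace_one]; norm_num
      · simpa using htr
    | succ k ih =>
      refine ⟨ih.2, ?_⟩
      have h0 : M ^ (k+2) = M ^ k * (M * M) := by
        rw [pow_succ, pow_succ, mul_assoc]
      rw [h0, hCH, mul_sub, Matrix.trace_sub, Matrix.mul_smul, Matrix.trace_smul,
        Matrix.mul_smul, Matrix.trace_smul, mul_one, ← pow_succ, ih.1, ih.2,
        smul_eq_mul, smul_eq_mul]
      ring
  exact fun m => (key m).1

theorem stmt_18 {Ω : Type*} [MeasurableSpace Ω] (μ : Measure Ω) [IsProbabilityMeasure μ]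
    (n : ℕ) (t : ℝ) (ht : 0 < t)
    (A B : Fin (n + 1) → Ω → ℝ)
    (p₀₀ p₀₁ p₁₁ : ℝ)
    (hsum : p₀₀ + 2 * p₀₁ + p₁₁ = 1)
    (h00 : 0 ≤ p₀₀) (h01 : 0 ≤ p₀₁) (h11 : 0 ≤ p₁₁)
    (hmeas : ∀ i, Measurable (fun ω => (A i ω, B i ω)))
    (hval : ∀ i ω, (A i ω = 0 ∨ A i ω = 1) ∧ (B i ω = 0 ∨ B i ω = 1))
    (hindep : iIndepFun (fun i ω => (A i ω, B i ω)) μ)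
    (hdist : ∀ i,
      μ {ω | A i ω = 1 ∧ B i ω = 1} = ENNReal.ofReal p₁₁ ∧
      μ {ω | A i ω = 1 ∧ B i ω = 0} = ENNReal.ofReal p₀₁ ∧
      μ {ω | A i ω = 0 ∧ B i ω = 1} = ENNReal.ofReal p₀₁ ∧
      μ {ω | A i ω = 0 ∧ B i ω = 0} = ENNReal.ofReal p₀₀)
    (σ2 T D : ℝ)
    (hσ : σ2 = p₁₁ - (p₀₁ + p₁₁) * (p₀₁ + p₁₁))
    (hT : T = p₁₁ * (Real.exp t - 1) + 1)
    (hD : D = σ2 * (Real.exp t - 1))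
    (hdisc : 0 < T ^ 2 - 4 * D) :
    ∫ ω, Real.exp (t * ∑ i : Fin (n + 1), A i ω * B (i + 1) ω) ∂μ
      = ((T + Real.sqrt (T ^ 2 - 4 * D)) / 2) ^ (n + 1)
        + ((T - Real.sqrt (T ^ 2 - 4 * D)) / 2) ^ (n + 1) := by
  classical
  set ind : Bool → ℝ := fun b => if b then 1 else 0 with hind
  set p : Bool × Bool → ℝ := fun s =>
    if s.1 then (if s.2 then p₁₁ else p₀₁) else (if s.2 then p₀₁ else p₀₀) with hp
  set φ : ℝ × ℝ → Bool × Bool := fun z => (decide (z.1 = 1), decide (z.2 = 1)) with hφdef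
  have hdec : ∀ x : ℝ, decide (x = 1) = (if x = 1 then true else false) := by
    intro x; by_cases h : x = 1 <;> simp [h]
  have hφ : Measurable φ := by
    apply Measurable.prod
    · show Measurable fun z : ℝ × ℝ => decide (z.1 = 1)
      have : (fun z : ℝ × ℝ => decide (z.1 = 1))
          = fun z : ℝ × ℝ => if z.1 = 1 then true else false := by
        funext z; exact hdec _
      rw [this]
      exact Measurable.ite (measurableSet_eq_fun measurable_fst measurable_const)
        measurable_const measurable_const
    · show Measurable fun z : ℝ × ℝ => decide (z.2 = 1)
      have : (fun z : ℝ × ℝ => decide (z.2 = 1))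
          = fun z : ℝ × ℝ => if z.2 = 1 then true else false := by
        funext z; exact hdec _
      rw [this]
      exact Measurable.ite (measurableSet_eq_fun measurable_snd measurable_const)
        measurable_const measurable_const
  set Y : Fin (n+1) → Ω → Bool × Bool := fun i => φ ∘ (fun ω => (A i ω, B i ω)) with hYdef
  have hYmeas : ∀ i, Measurable (Y i) := fun i => hφ.comp (hmeas i)
  have hYindep : iIndepFun Y μ :=
    hindep.comp (fun _ => φ) (fun _ => hφ)
  -- value identities
  have hA0 : ∀ i ω, A i ω ≠ 1 → A i ω = 0 := fun i ω h => ((hval i ω).1.resolve_right h)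
  have hB0 : ∀ i ω, B i ω ≠ 1 → B i ω = 0 := fun i ω h => ((hval i ω).2.resolve_right h)
  have hAind : ∀ i ω, A i ω = ind (Y i ω).1 := by
    intro i ω
    show A i ω = ind (decide (A i ω = 1))
    by_cases h : A i ω = 1
    · rw [decide_eq_true h, h]; rfl
    · rw [decide_eq_false h, hA0 i ω h]; rfl
  have hBind : ∀ i ω, B i ω = ind (Y i ω).2 := by
    intro i ω
    show B i ω = ind (decide (B i ω = 1))
    by_cases h : B i ω = 1
    · rw [decide_eq_true h, h]; rfl
    · rw [decide_eq_false h, hB0 i ω h]; rfl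
  -- preimage measures
  have hpre : ∀ i (y : Bool × Bool), μ (Y i ⁻¹' {y}) = ENNReal.ofReal (p y) := by
    intro i y
    obtain ⟨ha, hb⟩ := y
    obtain ⟨d1, d2, d3, d4⟩ := hdist i
    cases ha <;> cases hb
    · have : Y i ⁻¹' {(false, false)} = {ω | A i ω = 0 ∧ B i ω = 0} := by
        ext ω
        simp only [Set.mem_preimage, Set.mem_singleton_iff, Set.mem_setOf_eq, Prod.mk.injEq,
          hYdef, Function.comp, hφdef, decide_eq_false_iff_not]
        constructor
        · rintro ⟨h1, h2⟩; exact ⟨hA0 i ω h1, hB0 i ω h2⟩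
        · rintro ⟨h1, h2⟩; rw [h1, h2]; norm_num
      rw [this, d4]; rfl
    · have : Y i ⁻¹' {(false, true)} = {ω | A i ω = 0 ∧ B i ω = 1} := by
        ext ω
        simp only [Set.mem_preimage, Set.mem_singleton_iff, Set.mem_setOf_eq, Prod.mk.injEq,
          hYdef, Function.comp, hφdef, decide_eq_false_iff_not, decide_eq_true_eq]
        constructor
        · rintro ⟨h1, h2⟩; exact ⟨hA0 i ω h1, h2⟩
        · rintro ⟨h1, h2⟩; rw [h1]; exact ⟨by norm_num, h2⟩
      rw [this, d3]; rfl
    · have : Y i ⁻¹' {(true, false)} = {ω | A i ω = 1 ∧ B i ω = 0} := by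
        ext ω
        simp only [Set.mem_preimage, Set.mem_singleton_iff, Set.mem_setOf_eq, Prod.mk.injEq,
          hYdef, Function.comp, hφdef, decide_eq_false_iff_not, decide_eq_true_eq]
        constructor
        · rintro ⟨h1, h2⟩; exact ⟨h1, hB0 i ω h2⟩
        · rintro ⟨h1, h2⟩; rw [h2]; exact ⟨h1, by norm_num⟩
      rw [this, d2]; rfl
    · have : Y i ⁻¹' {(true, true)} = {ω | A i ω = 1 ∧ B i ω = 1} := by
        ext ω
        simp [hYdef, Function.comp, hφdef, Prod.ext_iff]
      rw [this, d1]; rfl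
  set ν : Fin (n+1) → Measure (Bool × Bool) := fun i => μ.map (Y i) with hνdef
  have hνprob : ∀ i, IsProbabilityMeasure (ν i) := fun i =>
    Measure.isProbabilityMeasure_map (hYmeas i).aemeasurable
  have hν : ∀ i (y : Bool × Bool), ν i {y} = ENNReal.ofReal (p y) := by
    intro i y
    rw [hνdef]
    rw [Measure.map_apply (hYmeas i) (measurableSet_singleton y)]
    exact hpre i y
  set Yvec : Ω → (Fin (n+1) → Bool × Bool) := fun ω i => Y i ω with hYvecdef
  have hYvecmeas : Measurable Yvec := measurable_pi_lambda _ (fun i => hYmeas i)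
  have hmap : μ.map Yvec = Measure.pi ν := by
    haveI : ∀ i, SigmaFinite (ν i) := fun i => by
      haveI := hνprob i; infer_instance
    have h : ∀ s : (i : Fin (n+1)) → Set (Bool × Bool), (∀ i, MeasurableSet (s i)) →
        (μ.map Yvec) (Set.univ.pi s) = ∏ i, ν i (s i) := by
      intro s hs
      rw [Measure.map_apply hYvecmeas (MeasurableSet.univ_pi hs)]
      have hpreim : Yvec ⁻¹' (Set.univ.pi s) = ⋂ i ∈ Finset.univ, Y i ⁻¹' (s i) := by
        ext ω; simp [hYvecdef, Set.mem_pi]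
      rw [hpreim, hYindep.measure_inter_preimage_eq_mul Finset.univ (fun i _ => hs i)]
      exact Finset.prod_congr rfl fun i _ =>
        (Measure.map_apply (hYmeas i) (hs i)).symm
    exact (Measure.pi_eq h).symm
  set F : (Fin (n+1) → Bool × Bool) → ℝ :=
    fun y => Real.exp (t * ∑ i : Fin (n+1), ind (y i).1 * ind (y (i+1)).2) with hF
  have step1 : ∫ ω, Real.exp (t * ∑ i : Fin (n + 1), A i ω * B (i + 1) ω) ∂μ
      = ∫ ω, F (Yvec ω) ∂μ := by
    refine integral_congr_ae (Filter.Eventually.of_forall fun ω => ?_)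
    have hsum' : ∑ i : Fin (n+1), A i ω * B (i+1) ω
        = ∑ i : Fin (n+1), ind ((Yvec ω) i).1 * ind ((Yvec ω) (i+1)).2 :=
      Finset.sum_congr rfl fun i _ => by rw [hAind i ω, hBind (i+1) ω]
    simp only [hF, hsum']
  have step2 : ∫ ω, F (Yvec ω) ∂μ = ∫ y, F y ∂(Measure.pi ν) := by
    rw [← hmap]
    exact (integral_map hYvecmeas.aemeasurable
      (measurable_of_finite F).aestronglyMeasurable).symm
  haveI := hνprob
  have step3 : ∫ y, F y ∂(Measure.pi ν)
      = ∑ y : Fin (n+1) → Bool × Bool, (∏ i, p (y i)) * F y := by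
    rw [integral_fintype (Integrable.of_finite)]
    refine Finset.sum_congr rfl fun y _ => ?_
    have hmass : (Measure.pi ν) {y} = ∏ i, ν i {y i} := by
      rw [← Set.univ_pi_singleton, Measure.pi_pi]
    rw [measureReal_def, hmass, smul_eq_mul]
    congr 1
    rw [ENNReal.toReal_prod]
    refine Finset.prod_congr rfl fun i _ => ?_
    rw [hν i (y i), ENNReal.toReal_ofReal]
    rcases (y i) with ⟨a, b⟩
    cases a <;> cases b <;> simp [hp, h00, h01, h11]
  rw [step1, step2, step3]
  -- algebraic part
  set M : Matrix Bool Bool ℝ :=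
    fun u v => ∑ c : Bool, p (v, c) * Real.exp (t * ind u * ind c) with hM
  have step4 : ∑ y : Fin (n+1) → Bool × Bool, (∏ i, p (y i)) * F y
      = ∑ x : Fin (n+1) → Bool, ∏ i : Fin (n+1), M (x i) (x (i+1)) := by
    have hterm : ∀ y : Fin (n+1) → Bool × Bool, (∏ i, p (y i)) * F y
        = ∏ i : Fin (n+1),
            (p (y (i+1)) * Real.exp (t * ind (y i).1 * ind (y (i+1)).2)) := by
      intro y
      simp only [hF]
      rw [Finset.mul_sum, Real.exp_sum,
        ← Equiv.prod_comp (Equiv.addRight (1 : Fin (n+1))) (fun j => p (y j)),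
        ← Finset.prod_mul_distrib]
      refine Finset.prod_congr rfl fun i _ => ?_
      simp only [Equiv.coe_addRight]
      congr 1
      ring
    rw [Finset.sum_congr rfl fun y _ => hterm y]
    rw [← Equiv.sum_comp (Equiv.arrowProdEquivProdArrow (Fin (n+1)) (fun _ => Bool) (fun _ => Bool)).symm]
    rw [Fintype.sum_prod_type]
    refine Finset.sum_congr rfl fun a _ => ?_
    have hre : ∀ b : Fin (n+1) → Bool,
        (∏ i : Fin (n+1), (p (a (i+1), b (i+1))
          * Real.exp (t * ind (a i) * ind (b (i+1)))))
        = (fun b' : Fin (n+1) → Bool => ∏ i : Fin (n+1),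
            (p (a (i+1), b' i) * Real.exp (t * ind (a i) * ind (b' i))))
          ((Equiv.arrowCongr (Equiv.addRight (1 : Fin (n+1))).symm (Equiv.refl Bool)) b) := by
      intro b
      simp only [Equiv.arrowCongr_apply, Equiv.refl_symm, Equiv.coe_refl, Function.comp,
        Equiv.symm_symm, Equiv.coe_addRight, id]
    calc ∑ b : Fin (n+1) → Bool, ∏ i : Fin (n+1),
          (p ((Equiv.arrowProdEquivProdArrow (Fin (n+1)) (fun _ => Bool) (fun _ => Bool)).symm (a, b) (i+1))
            * Real.exp (t * ind (((Equiv.arrowProdEquivProdArrow (Fin (n+1)) (fun _ => Bool) (fun _ => Bool)).symm (a, b) i).1)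
              * ind (((Equiv.arrowProdEquivProdArrow (Fin (n+1)) (fun _ => Bool) (fun _ => Bool)).symm (a, b) (i+1)).2)))
        = ∑ b : Fin (n+1) → Bool, ∏ i : Fin (n+1),
            (p (a (i+1), b (i+1)) * Real.exp (t * ind (a i) * ind (b (i+1)))) := rfl
      _ = ∑ b : Fin (n+1) → Bool, ∏ i : Fin (n+1),
            (p (a (i+1), b i) * Real.exp (t * ind (a i) * ind (b i))) :=
          Fintype.sum_equiv
            (Equiv.arrowCongr (Equiv.addRight (1 : Fin (n+1))).symm (Equiv.refl Bool))
            _ _ hre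
      _ = ∏ i : Fin (n+1), ∑ c : Bool, (p (a (i+1), c) * Real.exp (t * ind (a i) * ind c)) := by
          rw [Finset.prod_univ_sum, Fintype.piFinset_univ]
      _ = ∏ i : Fin (n+1), M (a i) (a (i+1)) := rfl
  rw [step4, aux_cyclic_trace M n]
  set s := Real.sqrt (T ^ 2 - 4 * D) with hs
  have hs2 : s ^ 2 = T ^ 2 - 4 * D := Real.sq_sqrt hdisc.le
  set α := (T + s) / 2 with hα
  set β := (T - s) / 2 with hβ
  have hab : α + β = T := by rw [hα, hβ]; ring
  have hprod : α * β = D := by rw [hα, hβ]; linear_combination (-1/4 : ℝ) * hs2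
  have hp00 : p₀₀ = 1 - 2 * p₀₁ - p₁₁ := by linarith
  have htrM : Matrix.trace M = α + β := by
    rw [hab]
    simp [Matrix.trace, Matrix.diag, hM, hp, hind, Fintype.sum_bool, hT, hp00]
    ring
  have hCH : M * M = (α + β) • M - (α * β) • (1 : Matrix Bool Bool ℝ) := by
    rw [hab, hprod]
    ext u v
    simp only [Matrix.mul_apply, Matrix.sub_apply, Matrix.smul_apply]
    cases u <;> cases v <;>
      simp [Matrix.mul_apply, Fintype.sum_bool, hM, hp, hind, Matrix.one_apply,
        Matrix.sub_apply, Matrix.smul_apply, smul_eq_mul, hT, hD, hσ, hp00] <;>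
      ring
  rw [aux_trace_pow M α β hCH htrM (n+1)]
end

section
/- For λ ≥ 20, a Poisson random variable with mean 2λ/3 satisfies P(Po(2λ/3) ≥ λ/2 − 1) ≥ 1 − Φ((λ/2 − 1 − 2λ/3)/√(2λ/3)) − 0.55/√(⌈2λ/3⌉), and this lower bound is at least 0.7. -/
open Real MeasureTheory Set Nat

/-- The standard normal CDF. -/
noncomputable def stdNormalCDF (x : ℝ) : ℝ :=
  ∫ u in Set.Iic x, Real.exp (-u ^ 2 / 2) / Real.sqrt (2 * Real.pi)

/-- `P(Po(μ) ≥ a)` for a Poisson random variable of mean `μ` and a real threshold `a`. -/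
noncomputable def poissonTail (μ a : ℝ) : ℝ :=
  ∑' k : ℕ, if a ≤ (k : ℝ) then Real.exp (-μ) * μ ^ k / (Nat.factorial k) else 0

lemma gauss_eq : (fun u : ℝ => Real.exp (-u ^ 2 / 2) / Real.sqrt (2 * Real.pi))
    = (fun u : ℝ => Real.exp (-(1/2 : ℝ) * u ^ 2) / Real.sqrt (2 * Real.pi)) := by
  funext u; ring_nf

lemma gauss_integrable : Integrable (fun u : ℝ => Real.exp (-u ^ 2 / 2) / Real.sqrt (2 * Real.pi)) := by
  rw [gauss_eq]
  exact (integrable_exp_neg_mul_sq (by norm_num : (0:ℝ) < 1/2)).div_const _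

lemma gauss_nonneg (u : ℝ) : 0 ≤ Real.exp (-u ^ 2 / 2) / Real.sqrt (2 * Real.pi) := by positivity

lemma gauss_total : (∫ u : ℝ, Real.exp (-u ^ 2 / 2) / Real.sqrt (2 * Real.pi)) = 1 := by
  rw [gauss_eq]
  rw [integral_div, integral_gaussian]
  rw [div_eq_one_iff_eq (by positivity)]
  congr 1
  ring

lemma cdf_mono {x y : ℝ} (h : x ≤ y) : stdNormalCDF x ≤ stdNormalCDF y := by
  unfold stdNormalCDF
  apply setIntegral_mono_set gauss_integrable.integrableOn
  · exact Filter.Eventually.of_forall fun u => gauss_nonneg u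
  · exact HasSubset.Subset.eventuallyLE (Iic_subset_Iic.2 h)

lemma cdf_nonneg (x : ℝ) : 0 ≤ stdNormalCDF x :=
  setIntegral_nonneg measurableSet_Iic fun u _ => gauss_nonneg u

lemma cdf_zero : stdNormalCDF 0 = 1/2 := by
  have hsym : stdNormalCDF 0 = ∫ u in Ioi (0:ℝ), Real.exp (-u ^ 2 / 2) / Real.sqrt (2 * Real.pi) := by
    unfold stdNormalCDF
    rw [← neg_zero, ← integral_comp_neg_Iic (0:ℝ)]
    norm_num
  have hadd := intervalIntegral.integral_Iic_add_Ioi (b := (0:ℝ))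
    gauss_integrable.integrableOn gauss_integrable.integrableOn
  rw [gauss_total] at hadd
  have : stdNormalCDF 0 + stdNormalCDF 0 = 1 := by
    nth_rewrite 2 [hsym]
    exact hadd
  linarith

lemma cdf_diff {a b : ℝ} : stdNormalCDF b - stdNormalCDF a
    = ∫ u in a..b, Real.exp (-u ^ 2 / 2) / Real.sqrt (2 * Real.pi) :=
  intervalIntegral.integral_Iic_sub_Iic gauss_integrable.integrableOn gauss_integrable.integrableOn


lemma exp_neg_le_quad {v : ℝ} (hv : 0 ≤ v) : Real.exp (-v) ≤ 1 - v + v ^ 2 / 2 := by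
  have key : ∀ w : ℝ, 0 ≤ w → 1 ≤ (1 - w + w ^ 2 / 2) * Real.exp w := by
    intro w hw
    set F : ℝ → ℝ := fun t => (1 - t + t ^ 2 / 2) * Real.exp t with hF
    have hderiv : ∀ t : ℝ, HasDerivAt F (t ^ 2 / 2 * Real.exp t) t := by
      intro t
      have h1 : HasDerivAt (fun t : ℝ => 1 - t + t ^ 2 / 2) (-1 + t) t := by
        have := ((hasDerivAt_id t).const_sub 1).add (((hasDerivAt_id t).pow 2).div_const 2)
        convert this using 1
        · rfl
        · rfl
        · funext x; simp [id]
        · simp [id]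
      have := h1.mul (Real.hasDerivAt_exp t)
      exact this.congr_deriv (by ring)
    have hmono : MonotoneOn F (Set.Ici 0) := by
      apply monotoneOn_of_deriv_nonneg (convex_Ici 0)
      · exact (Continuous.mul (by continuity) Real.continuous_exp).continuousOn
      · intro t _
        exact (hderiv t).differentiableAt.differentiableWithinAt
      · intro t ht
        rw [(hderiv t).deriv]
        positivity
    have := hmono (Set.mem_Ici.2 le_rfl) (Set.mem_Ici.2 hw) hw
    simpa [hF] using this
  have h1 := key v hv
  have h2 : (0:ℝ) < Real.exp v := Real.exp_pos v
  rw [Real.exp_neg]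
  rw [inv_le_iff_one_le_mul₀ h2]
  nlinarith [h1]


lemma integral_quad (T : ℝ) : (∫ u in (-T)..(0:ℝ), (1 - u ^ 2 / 2)) = T - T ^ 3 / 6 := by
  have h1 : (∫ u in (-T)..(0:ℝ), (1 - u ^ 2 / 2))
      = (∫ _ in (-T)..(0:ℝ), (1:ℝ)) - (∫ u in (-T)..(0:ℝ), u ^ 2) / 2 := by
    rw [← intervalIntegral.integral_div, ← intervalIntegral.integral_sub]
    · exact intervalIntegrable_const
    · exact ((continuous_pow 2).div_const 2).intervalIntegrable _ _
  rw [h1, intervalIntegral.integral_const, integral_pow]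
  simp; ring

lemma integral_quart (T : ℝ) : (∫ u in (-T)..(0:ℝ), (1 - u ^ 2 / 2 + u ^ 4 / 8)) = T - T ^ 3 / 6 + T ^ 5 / 40 := by
  have h1 : (∫ u in (-T)..(0:ℝ), (1 - u ^ 2 / 2 + u ^ 4 / 8))
      = (∫ u in (-T)..(0:ℝ), (1 - u ^ 2 / 2)) + (∫ u in (-T)..(0:ℝ), u ^ 4) / 8 := by
    rw [← intervalIntegral.integral_div, ← intervalIntegral.integral_add]
    · exact (by continuity : Continuous fun u : ℝ => 1 - u ^ 2 / 2).intervalIntegrable _ _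
    · exact ((continuous_pow 4).div_const 8).intervalIntegrable _ _
  rw [h1, integral_quad, integral_pow]
  simp; ring

lemma cdf_neg_eq (T : ℝ) : stdNormalCDF (-T)
    = 1/2 - ∫ u in (-T)..(0:ℝ), Real.exp (-u ^ 2 / 2) / Real.sqrt (2 * Real.pi) := by
  have := cdf_diff (a := -T) (b := 0)
  rw [cdf_zero] at this
  linarith

lemma sqrt_two_pi_pos : 0 < Real.sqrt (2 * Real.pi) := Real.sqrt_pos.2 (by positivity)

lemma phi_upper {T : ℝ} (hT : 0 ≤ T) :
    stdNormalCDF (-T) ≤ 1/2 - (T - T ^ 3 / 6) / Real.sqrt (2 * Real.pi) := by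
  rw [cdf_neg_eq]
  have hmono : (∫ u in (-T)..(0:ℝ), (1 - u ^ 2 / 2) / Real.sqrt (2 * Real.pi))
      ≤ ∫ u in (-T)..(0:ℝ), Real.exp (-u ^ 2 / 2) / Real.sqrt (2 * Real.pi) := by
    apply intervalIntegral.integral_mono_on (by linarith)
    · exact ((by continuity : Continuous fun u : ℝ => (1 - u ^ 2 / 2)).div_const _).intervalIntegrable _ _
    · exact gauss_integrable.intervalIntegrable
    · intro u _
      apply (div_le_div_iff_of_pos_right sqrt_two_pi_pos).2
      rw [neg_div]
      exact Real.one_sub_le_exp_neg (u ^ 2 / 2)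
  have hval : (∫ u in (-T)..(0:ℝ), (1 - u ^ 2 / 2) / Real.sqrt (2 * Real.pi))
      = (T - T ^ 3 / 6) / Real.sqrt (2 * Real.pi) := by
    rw [intervalIntegral.integral_div, integral_quad]
  linarith [hmono, hval.symm.le]

lemma phi_lower {T : ℝ} (hT : 0 ≤ T) :
    1/2 - (T - T ^ 3 / 6 + T ^ 5 / 40) / Real.sqrt (2 * Real.pi) ≤ stdNormalCDF (-T) := by
  rw [cdf_neg_eq]
  have hmono : (∫ u in (-T)..(0:ℝ), Real.exp (-u ^ 2 / 2) / Real.sqrt (2 * Real.pi))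
      ≤ ∫ u in (-T)..(0:ℝ), (1 - u ^ 2 / 2 + u ^ 4 / 8) / Real.sqrt (2 * Real.pi) := by
    apply intervalIntegral.integral_mono_on (by linarith)
    · exact gauss_integrable.intervalIntegrable
    · exact ((by continuity : Continuous fun u : ℝ => (1 - u ^ 2 / 2 + u ^ 4 / 8)).div_const _).intervalIntegrable _ _
    · intro u _
      apply (div_le_div_iff_of_pos_right sqrt_two_pi_pos).2
      have := exp_neg_le_quad (v := u ^ 2 / 2) (by positivity)
      rw [neg_div]
      calc Real.exp (-(u ^ 2 / 2)) ≤ 1 - u ^ 2 / 2 + (u ^ 2 / 2) ^ 2 / 2 := this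
        _ = 1 - u ^ 2 / 2 + u ^ 4 / 8 := by ring
  have hval : (∫ u in (-T)..(0:ℝ), (1 - u ^ 2 / 2 + u ^ 4 / 8) / Real.sqrt (2 * Real.pi))
      = (T - T ^ 3 / 6 + T ^ 5 / 40) / Real.sqrt (2 * Real.pi) := by
    rw [intervalIntegral.integral_div, integral_quart]
  linarith [hmono, hval.symm.le]

lemma sqrt_le_of_sq {x c : ℝ} (hc : 0 ≤ c) (h : x ≤ c ^ 2) : Real.sqrt x ≤ c := by
  calc Real.sqrt x ≤ Real.sqrt (c ^ 2) := Real.sqrt_le_sqrt h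
    _ = c := Real.sqrt_sq hc

lemma le_sqrt_of_sq {x c : ℝ} (hc : 0 ≤ c) (h : c ^ 2 ≤ x) : c ≤ Real.sqrt x := by
  calc c = Real.sqrt (c ^ 2) := (Real.sqrt_sq hc).symm
    _ ≤ Real.sqrt x := Real.sqrt_le_sqrt h

lemma sqrt_two_pi_lb : (2.5066 : ℝ) ≤ Real.sqrt (2 * Real.pi) :=
  le_sqrt_of_sq (by norm_num) (by nlinarith [Real.pi_gt_d6])

lemma sqrt_two_pi_ub : Real.sqrt (2 * Real.pi) ≤ 2.5067 :=
  sqrt_le_of_sq (by norm_num) (by nlinarith [Real.pi_lt_d6])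

lemma exp_third_lb : (1.3956 : ℝ) ≤ Real.exp (1/3) := by
  have h3 : Real.exp (1/3) ^ (3:ℕ) = Real.exp 1 := by
    rw [← Real.exp_nat_mul]; norm_num
  apply le_of_pow_le_pow_left₀ (n := 3) (by norm_num) (Real.exp_pos _).le
  rw [h3]
  nlinarith [Real.exp_one_gt_d9]

lemma exp_neg_n_third (n : ℕ) : Real.exp (-((n:ℝ)/3)) ≤ (1/1.3956) ^ n := by
  rw [Real.exp_neg, one_div, inv_pow]
  apply inv_anti₀ (by positivity)
  calc (1.3956:ℝ) ^ n ≤ Real.exp (1/3) ^ n := pow_le_pow_left₀ (by norm_num) exp_third_lb n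
    _ = Real.exp ((n:ℝ)/3) := by rw [← Real.exp_nat_mul]; ring_nf

lemma x_mono {l m : ℝ} (hl : 20 ≤ l) (hlm : l ≤ m) :
    (m/2 - 1 - 2*m/3) / Real.sqrt (2*m/3) ≤ (l/2 - 1 - 2*l/3) / Real.sqrt (2*l/3) := by
  have hm : (20:ℝ) ≤ m := hl.trans hlm
  have hl0 : (0:ℝ) < 2*l/3 := by linarith
  have hm0 : (0:ℝ) < 2*m/3 := by linarith
  have hsl : 0 < Real.sqrt (2*l/3) := Real.sqrt_pos.2 hl0
  have hsm : 0 < Real.sqrt (2*m/3) := Real.sqrt_pos.2 hm0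
  have hnl : l/2 - 1 - 2*l/3 = -(l/6 + 1) := by ring
  have hnm : m/2 - 1 - 2*m/3 = -(m/6 + 1) := by ring
  rw [hnl, hnm, neg_div, neg_div, neg_le_neg_iff]
  rw [div_le_div_iff₀ hsl hsm]
  have h1 : (l/6 + 1) * Real.sqrt (2*m/3) = Real.sqrt ((l/6+1)^2 * (2*m/3)) := by
    rw [Real.sqrt_mul (sq_nonneg _), Real.sqrt_sq (by linarith)]
  have h2 : (m/6 + 1) * Real.sqrt (2*l/3) = Real.sqrt ((m/6+1)^2 * (2*l/3)) := by
    rw [Real.sqrt_mul (sq_nonneg _), Real.sqrt_sq (by linarith)]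
  rw [h1, h2]
  apply Real.sqrt_le_sqrt
  have key : 0 ≤ (m - l) * (l*m - 36) :=
    mul_nonneg (by linarith) (by nlinarith)
  nlinarith [key]

lemma ceil_ge_14 {l : ℝ} (hl : 20 ≤ l) : (14:ℝ) ≤ (⌈2 * l / 3⌉₊ : ℝ) := by
  have : (13:ℕ) < ⌈2 * l / 3⌉₊ := by
    rw [Nat.lt_ceil]; push_cast; linarith
  exact_mod_cast this

lemma part2 (l : ℝ) (hl : 20 ≤ l) :
    (0.7 : ℝ) ≤ 1 - stdNormalCDF ((l / 2 - 1 - 2 * l / 3) / Real.sqrt (2 * l / 3))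
        - 0.55 / Real.sqrt (⌈2 * l / 3⌉₊ : ℝ) := by
  -- CDF bound
  have hx : stdNormalCDF ((l / 2 - 1 - 2 * l / 3) / Real.sqrt (2 * l / 3))
      ≤ stdNormalCDF ((20/2 - 1 - 2*20/3) / Real.sqrt (2*20/3)) :=
    cdf_mono (x_mono (le_refl 20) hl)
  have hx20 : (20/2 - 1 - 2*20/3) / Real.sqrt (2*20/3) = -((13/3) / Real.sqrt (40/3)) := by
    rw [show (2*20/3 : ℝ) = 40/3 by norm_num]
    rw [show (20/2 - 1 - 40/3 : ℝ) = -(13/3) by norm_num, neg_div]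
  set T : ℝ := (13/3) / Real.sqrt (40/3) with hT
  have hs_lo : (3.6514:ℝ) ≤ Real.sqrt (40/3) := le_sqrt_of_sq (by norm_num) (by norm_num)
  have hs_hi : Real.sqrt (40/3) ≤ 3.6515 := sqrt_le_of_sq (by norm_num) (by norm_num)
  have hs_pos : (0:ℝ) < Real.sqrt (40/3) := by linarith
  have hT_lo : (1.1866:ℝ) ≤ T := by
    rw [hT, le_div_iff₀ hs_pos]; nlinarith
  have hT_hi : T ≤ 1.1868 := by
    rw [hT, div_le_iff₀ hs_pos]; nlinarith
  have hupper := phi_upper (T := T) (by linarith)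
  have hnum : (0.9079:ℝ) ≤ T - T ^ 3 / 6 := by
    have h3 : T ^ 3 ≤ 1.1868 ^ 3 := pow_le_pow_left₀ (by linarith) hT_hi 3
    nlinarith
  have hfrac : (0.9079:ℝ) / 2.5067 ≤ (T - T ^ 3 / 6) / Real.sqrt (2 * Real.pi) :=
    div_le_div₀ (by nlinarith) hnum sqrt_two_pi_pos sqrt_two_pi_ub
  have hcdf : stdNormalCDF ((l / 2 - 1 - 2 * l / 3) / Real.sqrt (2 * l / 3))
      ≤ 1/2 - 0.9079/2.5067 := by
    rw [hx20] at hx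
    linarith [hupper]
  have h14 : (3.7416:ℝ) ≤ Real.sqrt (⌈2 * l / 3⌉₊ : ℝ) :=
    le_sqrt_of_sq (by norm_num) (by nlinarith [ceil_ge_14 hl])
  have hdiv : (0.55:ℝ) / Real.sqrt (⌈2 * l / 3⌉₊ : ℝ) ≤ 0.55 / 3.7416 :=
    div_le_div_of_nonneg_left (by norm_num) (by norm_num) h14
  have : (0.7:ℝ) ≤ 1 - (1/2 - 0.9079/2.5067) - 0.55/3.7416 := by norm_num
  linarith

lemma fact_le_fact_mul_pow {j k : ℕ} (h : j ≤ k) : k ! ≤ j ! * k ^ (k - j) := by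
  induction k, h using Nat.le_induction with
  | base => simp
  | succ k hk ih =>
    have h1 : (k+1)! = (k+1) * k ! := rfl
    have h2 : k ^ (k - j) ≤ (k+1) ^ (k - j) := Nat.pow_le_pow_left (by omega) _
    have h3 : k + 1 - j = (k - j) + 1 := by omega
    calc (k+1)! = (k+1) * k ! := h1
      _ ≤ (k+1) * (j ! * k ^ (k - j)) := Nat.mul_le_mul_left _ ih
      _ ≤ (k+1) * (j ! * (k+1) ^ (k - j)) := by
          exact Nat.mul_le_mul_left _ (Nat.mul_le_mul_left _ h2)
      _ = j ! * (k+1) ^ ((k - j) + 1) := by ring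
      _ = j ! * (k+1) ^ (k + 1 - j) := by rw [h3]

lemma term_le {μ : ℝ} (hμ : 0 < μ) {j k : ℕ} (hjk : j ≤ k) :
    μ ^ j / j ! ≤ μ ^ k / k ! * ((k:ℝ)/μ) ^ (k - j) := by
  have heq : μ ^ k / k ! * ((k:ℝ)/μ) ^ (k - j) = μ ^ j * ((k:ℝ) ^ (k - j) / k !) := by
    rw [div_pow]
    have hpow : μ ^ k = μ ^ j * μ ^ (k - j) := by
      rw [← pow_add]; congr 1; omega
    field_simp [hpow]
    linear_combination hpow
  rw [heq]
  have hf : (k ! : ℝ) ≤ j ! * (k:ℝ) ^ (k - j) := by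
    have := fact_le_fact_mul_pow hjk
    exact_mod_cast this
  have hj : (0:ℝ) < j ! := by exact_mod_cast Nat.factorial_pos j
  have hkf : (0:ℝ) < k ! := by exact_mod_cast Nat.factorial_pos k
  rw [div_le_iff₀ hj]
  have h2 : (1:ℝ) ≤ (k:ℝ) ^ (k - j) / k ! * j ! := by
    rw [div_mul_eq_mul_div, le_div_iff₀ hkf, one_mul]
    nlinarith [hf, hj.le]
  nlinarith [mul_le_mul_of_nonneg_left h2 (pow_nonneg hμ.le j)]

lemma sum_le_geom {μ : ℝ} {k : ℕ} (hk : 1 ≤ k) (hkμ : (k:ℝ) < μ) :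
    ∑ j ∈ Finset.range (k+1), μ ^ j / j ! ≤ μ ^ k / k ! * (μ / (μ - k)) := by
  have hμ : 0 < μ := lt_of_le_of_lt (Nat.cast_nonneg k) hkμ
  set r : ℝ := (k:ℝ)/μ with hr
  have hr0 : 0 ≤ r := by positivity
  have hr1 : r < 1 := by rw [hr, div_lt_one hμ]; exact hkμ
  have step1 : ∑ j ∈ Finset.range (k+1), μ ^ j / j !
      ≤ ∑ j ∈ Finset.range (k+1), μ ^ k / k ! * r ^ (k - j) := by
    apply Finset.sum_le_sum
    intro j hj
    exact term_le hμ (Nat.lt_succ_iff.1 (Finset.mem_range.1 hj))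
  have step2 : ∑ j ∈ Finset.range (k+1), μ ^ k / k ! * r ^ (k - j)
      = μ ^ k / k ! * ∑ j ∈ Finset.range (k+1), r ^ (k - j) := by
    rw [Finset.mul_sum]
  have step3 : ∑ j ∈ Finset.range (k+1), r ^ (k - j) = ∑ j ∈ Finset.range (k+1), r ^ j := by
    have := Finset.sum_range_reflect (fun j => r ^ j) (k+1)
    simpa using this
  have step4 : ∑ j ∈ Finset.range (k+1), r ^ j ≤ (1 - r)⁻¹ := by
    have hs : Summable (fun n : ℕ => r ^ n) := summable_geometric_of_lt_one hr0 hr1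
    have := Summable.sum_le_tsum (Finset.range (k+1)) (fun i _ => pow_nonneg hr0 i) hs
    rwa [tsum_geometric_of_lt_one hr0 hr1] at this
  have step5 : (1 - r)⁻¹ = μ / (μ - k) := by
    have h1 : 1 - r = (μ - k)/μ := by rw [hr]; field_simp
    rw [h1, inv_div]
  calc ∑ j ∈ Finset.range (k+1), μ ^ j / j ! ≤ μ ^ k / k ! * ∑ j ∈ Finset.range (k+1), r ^ (k - j) := by
        rw [← step2]; exact step1
    _ ≤ μ ^ k / k ! * (μ / (μ - k)) := by
        rw [step3] at *
        apply mul_le_mul_of_nonneg_left _ (by positivity)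
        rw [← step5]; exact step4

lemma stirling_lb (k : ℕ) (hk : 1 ≤ k) :
    Real.sqrt (2 * Real.pi * k) * ((k:ℝ) / Real.exp 1) ^ k ≤ (k ! : ℝ) := by
  obtain ⟨m, rfl⟩ : ∃ m, k = m + 1 := ⟨k - 1, (Nat.succ_pred_eq_of_pos hk).symm⟩
  have h1 : Real.sqrt Real.pi ≤ Stirling.stirlingSeq (m+1) := by
    apply le_of_tendsto Stirling.tendsto_stirlingSeq_sqrt_pi
    filter_upwards [Filter.eventually_ge_atTop (m+1)] with n hn
    obtain ⟨p, rfl⟩ : ∃ p, n = p + 1 := ⟨n - 1, by omega⟩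
    exact Stirling.stirlingSeq'_antitone (by omega : m ≤ p)
  rw [Stirling.stirlingSeq] at h1
  have hd : (0:ℝ) < Real.sqrt (2 * (m+1:ℕ)) * (((m+1:ℕ):ℝ) / Real.exp 1) ^ (m+1) := by
    apply mul_pos (Real.sqrt_pos.2 (by positivity)) (pow_pos (by positivity) _)
  rw [le_div_iff₀ hd] at h1
  calc Real.sqrt (2 * Real.pi * (m+1:ℕ)) * (((m+1:ℕ):ℝ) / Real.exp 1) ^ (m+1)
      = Real.sqrt Real.pi * (Real.sqrt (2 * (m+1:ℕ)) * (((m+1:ℕ):ℝ) / Real.exp 1) ^ (m+1)) := by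
        rw [show (2 * Real.pi * (m+1:ℕ) : ℝ) = Real.pi * (2 * (m+1:ℕ)) by ring,
          Real.sqrt_mul Real.pi_nonneg]
        ring
    _ ≤ (m+1)! := h1


lemma poisson_tail_ge {μ a : ℝ} (hμ : 0 ≤ μ) {k : ℕ} (ha : a ≤ (k:ℝ)+1) :
    1 - Real.exp (-μ) * ∑ j ∈ Finset.range (k+1), μ ^ j / j ! ≤ poissonTail μ a := by
  set p : ℕ → ℝ := fun n => Real.exp (-μ) * μ ^ n / n ! with hp
  have hpn : ∀ n, 0 ≤ p n := by
    intro n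
    have h1 : (0:ℝ) < (n ! : ℝ) := by exact_mod_cast Nat.factorial_pos n
    have h2 : (0:ℝ) ≤ μ ^ n := pow_nonneg hμ n
    have h3 : (0:ℝ) < Real.exp (-μ) := Real.exp_pos _
    rw [hp]
    positivity
  have hsump : Summable p := by
    have := (Real.summable_pow_div_factorial μ).mul_left (Real.exp (-μ))
    apply this.congr
    intro n
    simp only [hp]
    ring
  have htsum : ∑' n, p n = 1 := by
    have h1 : HasSum (fun n : ℕ => μ ^ n / n !) (Real.exp μ) := by
      rw [Real.exp_eq_exp_ℝ]; exact NormedSpace.expSeries_div_hasSum_exp μ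
    have h2 := h1.mul_left (Real.exp (-μ))
    have h3 : Real.exp (-μ) * Real.exp μ = 1 := by rw [← Real.exp_add]; simp
    rw [h3] at h2
    rw [← h2.tsum_eq]
    apply tsum_congr
    intro n
    simp only [hp]
    ring
  set f : ℕ → ℝ := fun n => if a ≤ (n:ℝ) then p n else 0 with hf
  have hptf : poissonTail μ a = ∑' n, f n := by
    unfold poissonTail
    apply tsum_congr
    intro n
    rw [hf, hp]
  have hf0 : ∀ n, 0 ≤ f n := by
    intro n
    rw [hf]
    dsimp only
    split
    · exact hpn n
    · exact le_refl _
  have hfle : ∀ n, f n ≤ p n := by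
    intro n
    rw [hf]
    dsimp only
    split
    · exact le_refl _
    · exact hpn n
  have hsumf : Summable f := Summable.of_nonneg_of_le hf0 hfle hsump
  have hsupp : ∀ n ∉ Finset.range (k+1), p n - f n = 0 := by
    intro n hn
    have hn' : k + 1 ≤ n := by
      by_contra hc
      exact hn (Finset.mem_range.2 (by omega))
    have han : a ≤ (n:ℝ) := by
      calc a ≤ (k:ℝ) + 1 := ha
        _ ≤ (n:ℝ) := by exact_mod_cast hn'
    rw [hf]
    simp [han]
  have hkey : ∑' n, (p n - f n) ≤ ∑ j ∈ Finset.range (k+1), p j := by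
    rw [tsum_eq_sum hsupp]
    apply Finset.sum_le_sum
    intro i _
    linarith [hf0 i]
  have hsplit : ∑' n, (p n - f n) = 1 - ∑' n, f n := by
    rw [Summable.tsum_sub hsump hsumf, htsum]
  have hfin : ∑ j ∈ Finset.range (k+1), p j
      = Real.exp (-μ) * ∑ j ∈ Finset.range (k+1), μ ^ j / j ! := by
    rw [Finset.mul_sum]
    apply Finset.sum_congr rfl
    intro j _
    simp only [hp]
    ring
  rw [hptf]
  have := hkey
  rw [hsplit, hfin] at this
  linarith

lemma exp_mul_pow_mono {μ0 μ : ℝ} (k : ℕ) (hk : (k:ℝ) ≤ μ0) (h0 : 0 < μ0) (h : μ0 ≤ μ) :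
    Real.exp (-μ) * μ ^ k ≤ Real.exp (-μ0) * μ0 ^ k := by
  have h1 : μ / μ0 ≤ Real.exp ((μ - μ0)/μ0) := by
    have := Real.add_one_le_exp ((μ - μ0)/μ0)
    have heq : (μ - μ0)/μ0 + 1 = μ/μ0 := by field_simp; ring
    linarith
  have h2 : (μ/μ0)^k ≤ Real.exp ((μ - μ0)/μ0)^k := pow_le_pow_left₀ (div_nonneg (by linarith) h0.le) h1 k
  have h3 : Real.exp ((μ - μ0)/μ0)^k = Real.exp (k * ((μ - μ0)/μ0)) := (Real.exp_nat_mul _ k).symm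
  have h4 : (k:ℝ) * ((μ - μ0)/μ0) ≤ μ - μ0 := by
    have hfrac : (k:ℝ)/μ0 ≤ 1 := by rw [div_le_one h0]; exact hk
    calc (k:ℝ) * ((μ - μ0)/μ0) = (μ - μ0) * ((k:ℝ)/μ0) := by ring
      _ ≤ (μ - μ0) * 1 := mul_le_mul_of_nonneg_left hfrac (by linarith)
      _ = μ - μ0 := mul_one _
  have h5 : μ ^ k ≤ μ0 ^ k * Real.exp (μ - μ0) := by
    have hμμ0 : μ ^ k = μ0 ^ k * (μ/μ0)^k := by
      rw [← mul_pow]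
      congr 1
      field_simp
    rw [hμμ0]
    apply mul_le_mul_of_nonneg_left _ (pow_nonneg h0.le k)
    calc (μ/μ0)^k ≤ Real.exp ((k:ℝ) * ((μ - μ0)/μ0)) := by rw [← h3]; exact h2
      _ ≤ Real.exp (μ - μ0) := Real.exp_le_exp.2 h4
  have h6 : Real.exp (-μ) * Real.exp (μ - μ0) = Real.exp (-μ0) := by
    rw [← Real.exp_add]; congr 1; ring
  calc Real.exp (-μ) * μ ^ k ≤ Real.exp (-μ) * (μ0 ^ k * Real.exp (μ - μ0)) :=
        mul_le_mul_of_nonneg_left h5 (Real.exp_pos _).le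
    _ = (Real.exp (-μ) * Real.exp (μ - μ0)) * μ0 ^ k := by ring
    _ = Real.exp (-μ0) * μ0 ^ k := by rw [h6]

lemma master (k : ℕ) (l R : ℝ) (hk9 : 9 ≤ k) (h1 : 2*(k:ℝ)+2 ≤ l) (h2 : l ≤ 2*(k:ℝ)+4)
    (hR : R ≤ stdNormalCDF ((l / 2 - 1 - 2 * l / 3) / Real.sqrt (2 * l / 3)))
    (hnum : Real.exp (-(((k:ℝ)+4)/3)) * ((4*(k:ℝ)+4)/(3*(k:ℝ)))^k * ((4*(k:ℝ)+4)/((k:ℝ)+4))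
        / Real.sqrt (2*Real.pi*(k:ℝ)) ≤ 0.55 / Real.sqrt ((4*(k:ℝ)+11)/3) + R) :
    1 - stdNormalCDF ((l / 2 - 1 - 2 * l / 3) / Real.sqrt (2 * l / 3))
        - 0.55 / Real.sqrt (⌈2 * l / 3⌉₊ : ℝ)
      ≤ poissonTail (2 * l / 3) (l / 2 - 1) := by
  have hkpos : (0:ℝ) < (k:ℝ) := by
    have : (0:ℕ) < k := by omega
    exact_mod_cast this
  set μ : ℝ := 2 * l / 3 with hμdef
  have hμ0 : (4*(k:ℝ)+4)/3 ≤ μ := by rw [hμdef]; linarith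
  have hμ1 : μ ≤ (4*(k:ℝ)+8)/3 := by rw [hμdef]; linarith
  have hkμ0 : (k:ℝ) < (4*(k:ℝ)+4)/3 := by linarith
  have hkμ : (k:ℝ) < μ := lt_of_lt_of_le hkμ0 hμ0
  have hμpos : 0 < μ := lt_trans hkpos hkμ
  have hk1 : 1 ≤ k := by omega
  set μ0 : ℝ := (4*(k:ℝ)+4)/3 with hμ0def
  have hμ0pos : 0 < μ0 := by rw [hμ0def]; linarith
  set F : ℝ := (k ! : ℝ) with hFdef
  have hF : 0 < F := by rw [hFdef]; exact_mod_cast Nat.factorial_pos k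
  set W : ℝ := Real.sqrt (2*Real.pi*(k:ℝ)) with hWdef
  have hW : 0 < W := Real.sqrt_pos.2 (by positivity)
  set P : ℝ := ((k:ℝ)/Real.exp 1)^k with hPdef
  have hP : 0 < P := pow_pos (by positivity) k
  have hstir : W * P ≤ F := stirling_lb k hk1
  set S : ℝ := ∑ j ∈ Finset.range (k+1), μ ^ j / j ! with hSdef
  -- step 1: sum bound
  have hsum : S ≤ μ ^ k / F * (μ / (μ - k)) := sum_le_geom hk1 hkμ
  have hstep1 : Real.exp (-μ) * S ≤ (Real.exp (-μ) * μ ^ k) * (μ / (μ - k)) / F := by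
    have := mul_le_mul_of_nonneg_left hsum (Real.exp_pos (-μ)).le
    calc Real.exp (-μ) * S ≤ Real.exp (-μ) * (μ ^ k / F * (μ / (μ - k))) := this
      _ = (Real.exp (-μ) * μ ^ k) * (μ / (μ - k)) / F := by ring
  -- step 2: monotonicity in μ
  have hexpmono : Real.exp (-μ) * μ ^ k ≤ Real.exp (-μ0) * μ0 ^ k :=
    exp_mul_pow_mono k (le_of_lt hkμ0) hμ0pos hμ0
  have hratio_pos : 0 < μ / (μ - k) := div_pos hμpos (by linarith)
  have hratio : μ / (μ - k) ≤ (4*(k:ℝ)+4)/((k:ℝ)+4) := by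
    rw [div_le_div_iff₀ (by linarith) (by linarith)]
    nlinarith [hμ0]
  have hX0pos : 0 < Real.exp (-μ0) * μ0 ^ k := mul_pos (Real.exp_pos _) (pow_pos hμ0pos k)
  have hstep2 : Real.exp (-μ) * S
      ≤ (Real.exp (-μ0) * μ0 ^ k) * ((4*(k:ℝ)+4)/((k:ℝ)+4)) / F := by
    apply hstep1.trans
    apply (div_le_div_iff_of_pos_right hF).2
    exact mul_le_mul hexpmono hratio hratio_pos.le hX0pos.le
  have hnum_pos : 0 ≤ (Real.exp (-μ0) * μ0 ^ k) * ((4*(k:ℝ)+4)/((k:ℝ)+4)) := by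
    apply mul_nonneg hX0pos.le
    apply div_nonneg <;> linarith
  have hstep3 : (Real.exp (-μ0) * μ0 ^ k) * ((4*(k:ℝ)+4)/((k:ℝ)+4)) / F
      ≤ (Real.exp (-μ0) * μ0 ^ k) * ((4*(k:ℝ)+4)/((k:ℝ)+4)) / (W * P) :=
    div_le_div_of_nonneg_left hnum_pos (mul_pos hW hP) hstir
  -- algebraic identity
  have hPeq : P = (k:ℝ)^k * (Real.exp (k:ℝ))⁻¹ := by
    rw [hPdef, div_pow, Real.exp_one_pow, div_eq_mul_inv]
  have hexp0 : Real.exp (-μ0) = Real.exp (-(((k:ℝ)+4)/3)) * (Real.exp (k:ℝ))⁻¹ := by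
    rw [← Real.exp_neg (k:ℝ), ← Real.exp_add]
    congr 1
    rw [hμ0def]
    ring
  have hμ0k : ((4*(k:ℝ)+4)/(3*(k:ℝ)))^k = μ0 ^ k / (k:ℝ)^k := by
    rw [← div_pow]
    congr 1
    rw [hμ0def, div_div]
  have heq : (Real.exp (-μ0) * μ0 ^ k) * ((4*(k:ℝ)+4)/((k:ℝ)+4)) / (W * P)
      = Real.exp (-(((k:ℝ)+4)/3)) * ((4*(k:ℝ)+4)/(3*(k:ℝ)))^k * ((4*(k:ℝ)+4)/((k:ℝ)+4)) / W := by
    rw [hPeq, hexp0, hμ0k]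
    have hek : Real.exp (k:ℝ) ≠ 0 := (Real.exp_pos _).ne'
    have hkk : ((k:ℝ))^k ≠ 0 := (pow_pos hkpos k).ne'
    have hk4 : ((k:ℝ)+4) ≠ 0 := by linarith
    have hWne : W ≠ 0 := hW.ne'
    field_simp
  -- sqrt comparisons
  have hl20 : (20:ℝ) ≤ l := by
    have : (9:ℝ) ≤ (k:ℝ) := by exact_mod_cast hk9
    linarith
  have hμ14 : (14:ℝ) ≤ (⌈μ⌉₊ : ℝ) := by
    have := ceil_ge_14 hl20
    rwa [← hμdef] at this
  have hsqceil_pos : 0 < Real.sqrt (⌈μ⌉₊ : ℝ) := Real.sqrt_pos.2 (by linarith)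
  have hceil_le : (⌈μ⌉₊ : ℝ) ≤ μ + 1 := (Nat.ceil_lt_add_one hμpos.le).le
  have h055a : 0.55 / Real.sqrt (μ+1) ≤ 0.55 / Real.sqrt (⌈μ⌉₊ : ℝ) :=
    div_le_div_of_nonneg_left (by norm_num) hsqceil_pos (Real.sqrt_le_sqrt hceil_le)
  have hsqμ1pos : 0 < Real.sqrt (μ+1) := Real.sqrt_pos.2 (by linarith)
  have h055b : 0.55 / Real.sqrt ((4*(k:ℝ)+11)/3) ≤ 0.55 / Real.sqrt (μ+1) :=
    div_le_div_of_nonneg_left (by norm_num) hsqμ1pos (Real.sqrt_le_sqrt (by linarith))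
  have htail : 1 - Real.exp (-μ) * S ≤ poissonTail μ (l/2 - 1) :=
    poisson_tail_ge hμpos.le (k := k) (by linarith)
  have hfinal : Real.exp (-μ) * S ≤ 0.55 / Real.sqrt (⌈μ⌉₊ : ℝ)
      + stdNormalCDF ((l / 2 - 1 - 2 * l / 3) / Real.sqrt (2 * l / 3)) := by
    calc Real.exp (-μ) * S ≤ (Real.exp (-μ0) * μ0 ^ k) * ((4*(k:ℝ)+4)/((k:ℝ)+4)) / (W * P) :=
          hstep2.trans hstep3
      _ = Real.exp (-(((k:ℝ)+4)/3)) * ((4*(k:ℝ)+4)/(3*(k:ℝ)))^k * ((4*(k:ℝ)+4)/((k:ℝ)+4)) / W := heq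
      _ ≤ 0.55 / Real.sqrt ((4*(k:ℝ)+11)/3) + R := by rw [hWdef] at *; exact hnum
      _ ≤ 0.55 / Real.sqrt (⌈μ⌉₊ : ℝ)
          + stdNormalCDF ((l / 2 - 1 - 2 * l / 3) / Real.sqrt (2 * l / 3)) := by
          have := h055b.trans h055a
          linarith [hR]
  linarith [htail, hfinal]

lemma cdf_x_lower (l m Tlo Thi : ℝ) (h20 : 20 ≤ l) (hlm : l ≤ m) (h0 : 0 ≤ Tlo)
    (hlo : Tlo ≤ (m/6+1) / Real.sqrt (2*m/3)) (hhi : (m/6+1) / Real.sqrt (2*m/3) ≤ Thi) :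
    1/2 - (Thi - Tlo^3/6 + Thi^5/40) / 2.5066
      ≤ stdNormalCDF ((l / 2 - 1 - 2 * l / 3) / Real.sqrt (2 * l / 3)) := by
  set T : ℝ := (m/6+1) / Real.sqrt (2*m/3) with hTdef
  have hT0 : 0 ≤ T := le_trans h0 hlo
  have hxm : (m/2 - 1 - 2*m/3) / Real.sqrt (2*m/3) = -T := by
    rw [show m/2 - 1 - 2*m/3 = -(m/6+1) by ring, neg_div, hTdef]
  have hmono : stdNormalCDF ((m/2 - 1 - 2*m/3) / Real.sqrt (2*m/3))
      ≤ stdNormalCDF ((l / 2 - 1 - 2 * l / 3) / Real.sqrt (2 * l / 3)) :=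
    cdf_mono (x_mono h20 hlm)
  rw [hxm] at hmono
  have hphi := phi_lower hT0
  -- numerator bounds
  have hQ0 : 0 ≤ T - T^3/6 + T^5/40 := by
    nlinarith [sq_nonneg (T^2 - 10/3), hT0, sq_nonneg T, pow_nonneg hT0 3, pow_nonneg hT0 5]
  have hQle : T - T^3/6 + T^5/40 ≤ Thi - Tlo^3/6 + Thi^5/40 := by
    have h3 : Tlo^3 ≤ T^3 := pow_le_pow_left₀ h0 hlo 3
    have h5 : T^5 ≤ Thi^5 := pow_le_pow_left₀ hT0 hhi 5
    linarith [hhi]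
  have hfrac : (T - T^3/6 + T^5/40) / Real.sqrt (2*Real.pi)
      ≤ (Thi - Tlo^3/6 + Thi^5/40) / 2.5066 :=
    div_le_div₀ (by linarith) hQle (by norm_num) sqrt_two_pi_lb
  linarith [hphi, hmono]

lemma tail_hnum (k : ℕ) (hk : 22 ≤ k) :
    Real.exp (-(((k:ℝ)+4)/3)) * ((4*(k:ℝ)+4)/(3*(k:ℝ)))^k * ((4*(k:ℝ)+4)/((k:ℝ)+4))
        / Real.sqrt (2*Real.pi*(k:ℝ)) ≤ 0.55 / Real.sqrt ((4*(k:ℝ)+11)/3) := by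
  have hkpos : (0:ℝ) < (k:ℝ) := by
    have : (0:ℕ) < k := by omega
    exact_mod_cast this
  have hk22 : (22:ℝ) ≤ (k:ℝ) := by exact_mod_cast hk
  -- factor bounds
  have hone : (1 + 1/(k:ℝ))^k ≤ Real.exp 1 := by
    have h1 : (1 + 1/(k:ℝ)) ≤ Real.exp (1/(k:ℝ)) := by
      have := Real.add_one_le_exp (1/(k:ℝ)); linarith
    calc (1 + 1/(k:ℝ))^k ≤ Real.exp (1/(k:ℝ))^k := pow_le_pow_left₀ (by positivity) h1 k
      _ = Real.exp ((k:ℝ) * (1/(k:ℝ))) := (Real.exp_nat_mul _ k).symm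
      _ = Real.exp 1 := by rw [mul_one_div, div_self hkpos.ne']
  have hfac : ((4*(k:ℝ)+4)/(3*(k:ℝ)))^k ≤ (4/3:ℝ)^k * Real.exp 1 := by
    have hbase : (4*(k:ℝ)+4)/(3*(k:ℝ)) = (4/3) * (1 + 1/(k:ℝ)) := by field_simp
    rw [hbase, mul_pow]
    exact mul_le_mul_of_nonneg_left hone (pow_nonneg (by norm_num) k)
  have hrho : (4*(k:ℝ)+4)/((k:ℝ)+4) ≤ 4 := by
    rw [div_le_iff₀ (by linarith)]; linarith
  have hrho0 : 0 ≤ (4*(k:ℝ)+4)/((k:ℝ)+4) := by positivity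
  have hexp : Real.exp (-(((k:ℝ)+4)/3)) ≤ (1/1.3956:ℝ)^(k+4) := by
    have := exp_neg_n_third (k+4)
    have hc : (((k+4:ℕ)):ℝ) = (k:ℝ)+4 := by push_cast; ring
    rwa [hc] at this
  -- numerator bound
  set B : ℝ := (1/1.3956:ℝ)^(k+4) * ((4/3:ℝ)^k * Real.exp 1) * 4 with hBdef
  have hnum_le : Real.exp (-(((k:ℝ)+4)/3)) * ((4*(k:ℝ)+4)/(3*(k:ℝ)))^k * ((4*(k:ℝ)+4)/((k:ℝ)+4)) ≤ B := by
    rw [hBdef]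
    have e0 : (0:ℝ) ≤ Real.exp (-(((k:ℝ)+4)/3)) := (Real.exp_pos _).le
    have f0 : (0:ℝ) ≤ ((4*(k:ℝ)+4)/(3*(k:ℝ)))^k := pow_nonneg (by positivity) k
    have hx1 : Real.exp (-(((k:ℝ)+4)/3)) * ((4*(k:ℝ)+4)/(3*(k:ℝ)))^k
        ≤ (1/1.3956:ℝ)^(k+4) * ((4/3:ℝ)^k * Real.exp 1) :=
      mul_le_mul hexp hfac f0 (by positivity)
    calc Real.exp (-(((k:ℝ)+4)/3)) * ((4*(k:ℝ)+4)/(3*(k:ℝ)))^k * ((4*(k:ℝ)+4)/((k:ℝ)+4))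
        ≤ ((1/1.3956:ℝ)^(k+4) * ((4/3:ℝ)^k * Real.exp 1)) * ((4*(k:ℝ)+4)/((k:ℝ)+4)) :=
          mul_le_mul_of_nonneg_right hx1 hrho0
      _ ≤ ((1/1.3956:ℝ)^(k+4) * ((4/3:ℝ)^k * Real.exp 1)) * 4 :=
          mul_le_mul_of_nonneg_left hrho (by positivity)
  have hB0 : 0 ≤ B := by rw [hBdef]; positivity
  -- sqrt splits
  have hsqk : (0:ℝ) < Real.sqrt (k:ℝ) := Real.sqrt_pos.2 hkpos
  have hsplit1 : Real.sqrt (2*Real.pi*(k:ℝ)) = Real.sqrt (2*Real.pi) * Real.sqrt (k:ℝ) :=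
    Real.sqrt_mul (by positivity) _
  have hsplit2 : Real.sqrt (1.5*(k:ℝ)) = Real.sqrt 1.5 * Real.sqrt (k:ℝ) :=
    Real.sqrt_mul (by norm_num) _
  have hs1 : Real.sqrt ((4*(k:ℝ)+11)/3) ≤ Real.sqrt (1.5*(k:ℝ)) :=
    Real.sqrt_le_sqrt (by linarith)
  have hRHS : 0.55 / Real.sqrt (1.5*(k:ℝ)) ≤ 0.55 / Real.sqrt ((4*(k:ℝ)+11)/3) :=
    div_le_div_of_nonneg_left (by norm_num) (Real.sqrt_pos.2 (by linarith)) hs1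
  -- key scalar inequality
  have hsqrt15 : Real.sqrt 1.5 ≤ 1.2248 := sqrt_le_of_sq (by norm_num) (by norm_num)
  have hBB : B * Real.sqrt 1.5 ≤ 0.55 * Real.sqrt (2*Real.pi) := by
    have hc : B ≤ (1/1.3956:ℝ)^4 * ((4/3*(1/1.3956):ℝ))^22 * 2.7182818286 * 4 := by
      rw [hBdef]
      have h1 : (1/1.3956:ℝ)^(k+4) = (1/1.3956:ℝ)^k * (1/1.3956:ℝ)^4 := by rw [pow_add]
      have h2 : (1/1.3956:ℝ)^k * (4/3:ℝ)^k = ((4/3*(1/1.3956):ℝ))^k := by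
        rw [← mul_pow]; congr 1; ring
      have h3 : ((4/3*(1/1.3956):ℝ))^k ≤ ((4/3*(1/1.3956):ℝ))^22 := by
        apply pow_le_pow_of_le_one (by norm_num) (by norm_num) hk
      have h4 : Real.exp 1 ≤ 2.7182818286 := le_of_lt Real.exp_one_lt_d9
      have hepos : (0:ℝ) < Real.exp 1 := Real.exp_pos 1
      calc (1/1.3956:ℝ)^(k+4) * ((4/3:ℝ)^k * Real.exp 1) * 4
          = ((1/1.3956:ℝ)^k * (4/3:ℝ)^k) * (1/1.3956:ℝ)^4 * Real.exp 1 * 4 := by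
            rw [h1]; ring
        _ = ((4/3*(1/1.3956):ℝ))^k * (1/1.3956:ℝ)^4 * Real.exp 1 * 4 := by rw [h2]
        _ ≤ ((4/3*(1/1.3956):ℝ))^22 * (1/1.3956:ℝ)^4 * Real.exp 1 * 4 := by
            apply mul_le_mul_of_nonneg_right _ (by norm_num)
            apply mul_le_mul_of_nonneg_right _ hepos.le
            exact mul_le_mul_of_nonneg_right h3 (by positivity)
        _ ≤ ((4/3*(1/1.3956):ℝ))^22 * (1/1.3956:ℝ)^4 * 2.7182818286 * 4 := by
            apply mul_le_mul_of_nonneg_right _ (by norm_num)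
            exact mul_le_mul_of_nonneg_left h4 (by positivity)
        _ = (1/1.3956:ℝ)^4 * ((4/3*(1/1.3956):ℝ))^22 * 2.7182818286 * 4 := by ring
    calc B * Real.sqrt 1.5 ≤ ((1/1.3956:ℝ)^4 * ((4/3*(1/1.3956):ℝ))^22 * 2.7182818286 * 4) * 1.2248 := by
          apply mul_le_mul hc hsqrt15 (Real.sqrt_nonneg _) (by norm_num)
      _ ≤ 0.55 * 2.5066 := by norm_num
      _ ≤ 0.55 * Real.sqrt (2*Real.pi) := by nlinarith [sqrt_two_pi_lb]
  have hmain : B / Real.sqrt (2*Real.pi*(k:ℝ)) ≤ 0.55 / Real.sqrt (1.5*(k:ℝ)) := by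
    rw [hsplit1, hsplit2, div_le_div_iff₀ (by positivity) (by positivity)]
    calc B * (Real.sqrt 1.5 * Real.sqrt (k:ℝ)) = (B * Real.sqrt 1.5) * Real.sqrt (k:ℝ) := by ring
      _ ≤ (0.55 * Real.sqrt (2*Real.pi)) * Real.sqrt (k:ℝ) :=
          mul_le_mul_of_nonneg_right hBB hsqk.le
      _ = 0.55 * (Real.sqrt (2*Real.pi) * Real.sqrt (k:ℝ)) := by ring
  calc Real.exp (-(((k:ℝ)+4)/3)) * ((4*(k:ℝ)+4)/(3*(k:ℝ)))^k * ((4*(k:ℝ)+4)/((k:ℝ)+4))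
        / Real.sqrt (2*Real.pi*(k:ℝ))
      ≤ B / Real.sqrt (2*Real.pi*(k:ℝ)) := by
        apply (div_le_div_iff_of_pos_right (Real.sqrt_pos.2 (by positivity))).2 hnum_le
    _ ≤ 0.55 / Real.sqrt (1.5*(k:ℝ)) := hmain
    _ ≤ 0.55 / Real.sqrt ((4*(k:ℝ)+11)/3) := hRHS

lemma hnum_reduce (k : ℕ) (hk1 : 1 ≤ k) (R w s2 : ℝ)
    (hw0 : 0 < w) (hw : w ≤ Real.sqrt (2*Real.pi*(k:ℝ)))
    (hs2 : Real.sqrt ((4*(k:ℝ)+11)/3) ≤ s2)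
    (hfin : (1/1.3956:ℝ)^(k+4) * ((4*(k:ℝ)+4)/(3*(k:ℝ)))^k * ((4*(k:ℝ)+4)/((k:ℝ)+4)) / w
      ≤ 0.55/s2 + R) :
    Real.exp (-(((k:ℝ)+4)/3)) * ((4*(k:ℝ)+4)/(3*(k:ℝ)))^k * ((4*(k:ℝ)+4)/((k:ℝ)+4))
        / Real.sqrt (2*Real.pi*(k:ℝ)) ≤ 0.55 / Real.sqrt ((4*(k:ℝ)+11)/3) + R := by
  have hkpos : (0:ℝ) < (k:ℝ) := by
    have : (0:ℕ) < k := hk1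
    exact_mod_cast this
  have hA0 : (0:ℝ) ≤ ((4*(k:ℝ)+4)/(3*(k:ℝ)))^k := pow_nonneg (by positivity) k
  have hrho0 : (0:ℝ) ≤ (4*(k:ℝ)+4)/((k:ℝ)+4) := by positivity
  have hexp : Real.exp (-(((k:ℝ)+4)/3)) ≤ (1/1.3956:ℝ)^(k+4) := by
    have := exp_neg_n_third (k+4)
    have hc : (((k+4:ℕ)):ℝ) = (k:ℝ)+4 := by push_cast; ring
    rwa [hc] at this
  have hnum_le : Real.exp (-(((k:ℝ)+4)/3)) * ((4*(k:ℝ)+4)/(3*(k:ℝ)))^k * ((4*(k:ℝ)+4)/((k:ℝ)+4))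
      ≤ (1/1.3956:ℝ)^(k+4) * ((4*(k:ℝ)+4)/(3*(k:ℝ)))^k * ((4*(k:ℝ)+4)/((k:ℝ)+4)) :=
    mul_le_mul_of_nonneg_right (mul_le_mul_of_nonneg_right hexp hA0) hrho0
  have hsq311 : (0:ℝ) < Real.sqrt ((4*(k:ℝ)+11)/3) := Real.sqrt_pos.2 (by positivity)
  have hstep : Real.exp (-(((k:ℝ)+4)/3)) * ((4*(k:ℝ)+4)/(3*(k:ℝ)))^k * ((4*(k:ℝ)+4)/((k:ℝ)+4))
        / Real.sqrt (2*Real.pi*(k:ℝ))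
      ≤ (1/1.3956:ℝ)^(k+4) * ((4*(k:ℝ)+4)/(3*(k:ℝ)))^k * ((4*(k:ℝ)+4)/((k:ℝ)+4)) / w :=
    div_le_div₀ (by positivity) hnum_le hw0 hw
  have hstep2 : (0.55:ℝ)/s2 ≤ 0.55 / Real.sqrt ((4*(k:ℝ)+11)/3) :=
    div_le_div_of_nonneg_left (by norm_num) hsq311 hs2
  linarith [hstep.trans hfin]


lemma case_9 (l : ℝ) (ha : (20:ℝ) ≤ l) (hb : l ≤ 22) :
    1 - stdNormalCDF ((l / 2 - 1 - 2 * l / 3) / Real.sqrt (2 * l / 3))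
        - 0.55 / Real.sqrt (⌈2 * l / 3⌉₊ : ℝ)
      ≤ poissonTail (2 * l / 3) (l / 2 - 1) := by
  have hs_lo : (3.8297:ℝ) ≤ Real.sqrt (2*(22:ℝ)/3) := le_sqrt_of_sq (by norm_num) (by norm_num)
  have hs_hi : Real.sqrt (2*(22:ℝ)/3) ≤ 3.82971 := sqrt_le_of_sq (by norm_num) (by norm_num)
  have hs_pos : (0:ℝ) < Real.sqrt (2*(22:ℝ)/3) := lt_of_lt_of_le (by norm_num) hs_lo
  have hT_lo : (1.21854:ℝ) ≤ ((22:ℝ)/6+1) / Real.sqrt (2*(22:ℝ)/3) := by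
    rw [le_div_iff₀ hs_pos]; nlinarith
  have hT_hi : ((22:ℝ)/6+1) / Real.sqrt (2*(22:ℝ)/3) ≤ 1.21855 := by
    rw [div_le_iff₀ hs_pos]; nlinarith
  have hR := cdf_x_lower l 22 1.21854 1.21855 (by linarith) (by linarith) (by norm_num) hT_lo hT_hi
  apply master 9 l (1/2 - ((1.21855:ℝ) - (1.21854:ℝ)^3/6 + (1.21855:ℝ)^5/40) / 2.5066)
    (by norm_num) (by push_cast; linarith) (by push_cast; linarith) hR
  apply hnum_reduce 9 (by norm_num) _ 7.51988 3.95812 (by norm_num)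
    (le_sqrt_of_sq (by norm_num) (by push_cast; nlinarith [Real.pi_gt_d6]))
    (sqrt_le_of_sq (by norm_num) (by push_cast; norm_num))
  push_cast
  norm_num

lemma case_10 (l : ℝ) (ha : (22:ℝ) ≤ l) (hb : l ≤ 24) :
    1 - stdNormalCDF ((l / 2 - 1 - 2 * l / 3) / Real.sqrt (2 * l / 3))
        - 0.55 / Real.sqrt (⌈2 * l / 3⌉₊ : ℝ)
      ≤ poissonTail (2 * l / 3) (l / 2 - 1) := by
  have hs_lo : (4.0:ℝ) ≤ Real.sqrt (2*(24:ℝ)/3) := le_sqrt_of_sq (by norm_num) (by norm_num)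
  have hs_hi : Real.sqrt (2*(24:ℝ)/3) ≤ 4.0 := sqrt_le_of_sq (by norm_num) (by norm_num)
  have hs_pos : (0:ℝ) < Real.sqrt (2*(24:ℝ)/3) := lt_of_lt_of_le (by norm_num) hs_lo
  have hT_lo : (1.25:ℝ) ≤ ((24:ℝ)/6+1) / Real.sqrt (2*(24:ℝ)/3) := by
    rw [le_div_iff₀ hs_pos]; nlinarith
  have hT_hi : ((24:ℝ)/6+1) / Real.sqrt (2*(24:ℝ)/3) ≤ 1.25 := by
    rw [div_le_iff₀ hs_pos]; nlinarith
  have hR := cdf_x_lower l 24 1.25 1.25 (by linarith) (by linarith) (by norm_num) hT_lo hT_hi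
  apply master 10 l (1/2 - ((1.25:ℝ) - (1.25:ℝ)^3/6 + (1.25:ℝ)^5/40) / 2.5066)
    (by norm_num) (by push_cast; linarith) (by push_cast; linarith) hR
  apply hnum_reduce 10 (by norm_num) _ 7.92665 4.12311 (by norm_num)
    (le_sqrt_of_sq (by norm_num) (by push_cast; nlinarith [Real.pi_gt_d6]))
    (sqrt_le_of_sq (by norm_num) (by push_cast; norm_num))
  push_cast
  norm_num

lemma case_11 (l : ℝ) (ha : (24:ℝ) ≤ l) (hb : l ≤ 26) :
    1 - stdNormalCDF ((l / 2 - 1 - 2 * l / 3) / Real.sqrt (2 * l / 3))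
        - 0.55 / Real.sqrt (⌈2 * l / 3⌉₊ : ℝ)
      ≤ poissonTail (2 * l / 3) (l / 2 - 1) := by
  have hs_lo : (4.16333:ℝ) ≤ Real.sqrt (2*(26:ℝ)/3) := le_sqrt_of_sq (by norm_num) (by norm_num)
  have hs_hi : Real.sqrt (2*(26:ℝ)/3) ≤ 4.16334 := sqrt_le_of_sq (by norm_num) (by norm_num)
  have hs_pos : (0:ℝ) < Real.sqrt (2*(26:ℝ)/3) := lt_of_lt_of_le (by norm_num) hs_lo
  have hT_lo : (1.28102:ℝ) ≤ ((26:ℝ)/6+1) / Real.sqrt (2*(26:ℝ)/3) := by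
    rw [le_div_iff₀ hs_pos]; nlinarith
  have hT_hi : ((26:ℝ)/6+1) / Real.sqrt (2*(26:ℝ)/3) ≤ 1.28103 := by
    rw [div_le_iff₀ hs_pos]; nlinarith
  have hR := cdf_x_lower l 26 1.28102 1.28103 (by linarith) (by linarith) (by norm_num) hT_lo hT_hi
  apply master 11 l (1/2 - ((1.28103:ℝ) - (1.28102:ℝ)^3/6 + (1.28103:ℝ)^5/40) / 2.5066)
    (by norm_num) (by push_cast; linarith) (by push_cast; linarith) hR
  apply hnum_reduce 11 (by norm_num) _ 8.31354 4.28175 (by norm_num)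
    (le_sqrt_of_sq (by norm_num) (by push_cast; nlinarith [Real.pi_gt_d6]))
    (sqrt_le_of_sq (by norm_num) (by push_cast; norm_num))
  push_cast
  norm_num

lemma case_12 (l : ℝ) (ha : (26:ℝ) ≤ l) (hb : l ≤ 28) :
    1 - stdNormalCDF ((l / 2 - 1 - 2 * l / 3) / Real.sqrt (2 * l / 3))
        - 0.55 / Real.sqrt (⌈2 * l / 3⌉₊ : ℝ)
      ≤ poissonTail (2 * l / 3) (l / 2 - 1) := by
  have hs_lo : (4.32049:ℝ) ≤ Real.sqrt (2*(28:ℝ)/3) := le_sqrt_of_sq (by norm_num) (by norm_num)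
  have hs_hi : Real.sqrt (2*(28:ℝ)/3) ≤ 4.3205 := sqrt_le_of_sq (by norm_num) (by norm_num)
  have hs_pos : (0:ℝ) < Real.sqrt (2*(28:ℝ)/3) := lt_of_lt_of_le (by norm_num) hs_lo
  have hT_lo : (1.31157:ℝ) ≤ ((28:ℝ)/6+1) / Real.sqrt (2*(28:ℝ)/3) := by
    rw [le_div_iff₀ hs_pos]; nlinarith
  have hT_hi : ((28:ℝ)/6+1) / Real.sqrt (2*(28:ℝ)/3) ≤ 1.31158 := by
    rw [div_le_iff₀ hs_pos]; nlinarith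
  have hR := cdf_x_lower l 28 1.31157 1.31158 (by linarith) (by linarith) (by norm_num) hT_lo hT_hi
  apply master 12 l (1/2 - ((1.31158:ℝ) - (1.31157:ℝ)^3/6 + (1.31158:ℝ)^5/40) / 2.5066)
    (by norm_num) (by push_cast; linarith) (by push_cast; linarith) hR
  apply hnum_reduce 12 (by norm_num) _ 8.68321 4.43472 (by norm_num)
    (le_sqrt_of_sq (by norm_num) (by push_cast; nlinarith [Real.pi_gt_d6]))
    (sqrt_le_of_sq (by norm_num) (by push_cast; norm_num))
  push_cast
  norm_num

lemma case_13 (l : ℝ) (ha : (28:ℝ) ≤ l) (hb : l ≤ 30) :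
    1 - stdNormalCDF ((l / 2 - 1 - 2 * l / 3) / Real.sqrt (2 * l / 3))
        - 0.55 / Real.sqrt (⌈2 * l / 3⌉₊ : ℝ)
      ≤ poissonTail (2 * l / 3) (l / 2 - 1) := by
  have hs_lo : (4.47213:ℝ) ≤ Real.sqrt (2*(30:ℝ)/3) := le_sqrt_of_sq (by norm_num) (by norm_num)
  have hs_hi : Real.sqrt (2*(30:ℝ)/3) ≤ 4.47214 := sqrt_le_of_sq (by norm_num) (by norm_num)
  have hs_pos : (0:ℝ) < Real.sqrt (2*(30:ℝ)/3) := lt_of_lt_of_le (by norm_num) hs_lo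
  have hT_lo : (1.34163:ℝ) ≤ ((30:ℝ)/6+1) / Real.sqrt (2*(30:ℝ)/3) := by
    rw [le_div_iff₀ hs_pos]; nlinarith
  have hT_hi : ((30:ℝ)/6+1) / Real.sqrt (2*(30:ℝ)/3) ≤ 1.34165 := by
    rw [div_le_iff₀ hs_pos]; nlinarith
  have hR := cdf_x_lower l 30 1.34163 1.34165 (by linarith) (by linarith) (by norm_num) hT_lo hT_hi
  apply master 13 l (1/2 - ((1.34165:ℝ) - (1.34163:ℝ)^3/6 + (1.34165:ℝ)^5/40) / 2.5066)
    (by norm_num) (by push_cast; linarith) (by push_cast; linarith) hR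
  apply hnum_reduce 13 (by norm_num) _ 9.03777 4.58258 (by norm_num)
    (le_sqrt_of_sq (by norm_num) (by push_cast; nlinarith [Real.pi_gt_d6]))
    (sqrt_le_of_sq (by norm_num) (by push_cast; norm_num))
  push_cast
  norm_num

lemma case_14 (l : ℝ) (ha : (30:ℝ) ≤ l) (hb : l ≤ 32) :
    1 - stdNormalCDF ((l / 2 - 1 - 2 * l / 3) / Real.sqrt (2 * l / 3))
        - 0.55 / Real.sqrt (⌈2 * l / 3⌉₊ : ℝ)
      ≤ poissonTail (2 * l / 3) (l / 2 - 1) := by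
  have hs_lo : (4.6188:ℝ) ≤ Real.sqrt (2*(32:ℝ)/3) := le_sqrt_of_sq (by norm_num) (by norm_num)
  have hs_hi : Real.sqrt (2*(32:ℝ)/3) ≤ 4.61881 := sqrt_le_of_sq (by norm_num) (by norm_num)
  have hs_pos : (0:ℝ) < Real.sqrt (2*(32:ℝ)/3) := lt_of_lt_of_le (by norm_num) hs_lo
  have hT_lo : (1.3712:ℝ) ≤ ((32:ℝ)/6+1) / Real.sqrt (2*(32:ℝ)/3) := by
    rw [le_div_iff₀ hs_pos]; nlinarith
  have hT_hi : ((32:ℝ)/6+1) / Real.sqrt (2*(32:ℝ)/3) ≤ 1.37121 := by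
    rw [div_le_iff₀ hs_pos]; nlinarith
  have hR := cdf_x_lower l 32 1.3712 1.37121 (by linarith) (by linarith) (by norm_num) hT_lo hT_hi
  apply master 14 l (1/2 - ((1.37121:ℝ) - (1.3712:ℝ)^3/6 + (1.37121:ℝ)^5/40) / 2.5066)
    (by norm_num) (by push_cast; linarith) (by push_cast; linarith) hR
  apply hnum_reduce 14 (by norm_num) _ 9.37894 4.72582 (by norm_num)
    (le_sqrt_of_sq (by norm_num) (by push_cast; nlinarith [Real.pi_gt_d6]))
    (sqrt_le_of_sq (by norm_num) (by push_cast; norm_num))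
  push_cast
  norm_num

lemma case_15 (l : ℝ) (ha : (32:ℝ) ≤ l) (hb : l ≤ 34) :
    1 - stdNormalCDF ((l / 2 - 1 - 2 * l / 3) / Real.sqrt (2 * l / 3))
        - 0.55 / Real.sqrt (⌈2 * l / 3⌉₊ : ℝ)
      ≤ poissonTail (2 * l / 3) (l / 2 - 1) := by
  have hs_lo : (4.76095:ℝ) ≤ Real.sqrt (2*(34:ℝ)/3) := le_sqrt_of_sq (by norm_num) (by norm_num)
  have hs_hi : Real.sqrt (2*(34:ℝ)/3) ≤ 4.76096 := sqrt_le_of_sq (by norm_num) (by norm_num)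
  have hs_pos : (0:ℝ) < Real.sqrt (2*(34:ℝ)/3) := lt_of_lt_of_le (by norm_num) hs_lo
  have hT_lo : (1.40027:ℝ) ≤ ((34:ℝ)/6+1) / Real.sqrt (2*(34:ℝ)/3) := by
    rw [le_div_iff₀ hs_pos]; nlinarith
  have hT_hi : ((34:ℝ)/6+1) / Real.sqrt (2*(34:ℝ)/3) ≤ 1.40029 := by
    rw [div_le_iff₀ hs_pos]; nlinarith
  have hR := cdf_x_lower l 34 1.40027 1.40029 (by linarith) (by linarith) (by norm_num) hT_lo hT_hi
  apply master 15 l (1/2 - ((1.40029:ℝ) - (1.40027:ℝ)^3/6 + (1.40029:ℝ)^5/40) / 2.5066)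
    (by norm_num) (by push_cast; linarith) (by push_cast; linarith) hR
  apply hnum_reduce 15 (by norm_num) _ 9.70812 4.86484 (by norm_num)
    (le_sqrt_of_sq (by norm_num) (by push_cast; nlinarith [Real.pi_gt_d6]))
    (sqrt_le_of_sq (by norm_num) (by push_cast; norm_num))
  push_cast
  norm_num

lemma case_16 (l : ℝ) (ha : (34:ℝ) ≤ l) (hb : l ≤ 36) :
    1 - stdNormalCDF ((l / 2 - 1 - 2 * l / 3) / Real.sqrt (2 * l / 3))
        - 0.55 / Real.sqrt (⌈2 * l / 3⌉₊ : ℝ)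
      ≤ poissonTail (2 * l / 3) (l / 2 - 1) := by
  have hs_lo : (4.89897:ℝ) ≤ Real.sqrt (2*(36:ℝ)/3) := le_sqrt_of_sq (by norm_num) (by norm_num)
  have hs_hi : Real.sqrt (2*(36:ℝ)/3) ≤ 4.89898 := sqrt_le_of_sq (by norm_num) (by norm_num)
  have hs_pos : (0:ℝ) < Real.sqrt (2*(36:ℝ)/3) := lt_of_lt_of_le (by norm_num) hs_lo
  have hT_lo : (1.42886:ℝ) ≤ ((36:ℝ)/6+1) / Real.sqrt (2*(36:ℝ)/3) := by
    rw [le_div_iff₀ hs_pos]; nlinarith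
  have hT_hi : ((36:ℝ)/6+1) / Real.sqrt (2*(36:ℝ)/3) ≤ 1.42888 := by
    rw [div_le_iff₀ hs_pos]; nlinarith
  have hR := cdf_x_lower l 36 1.42886 1.42888 (by linarith) (by linarith) (by norm_num) hT_lo hT_hi
  apply master 16 l (1/2 - ((1.42888:ℝ) - (1.42886:ℝ)^3/6 + (1.42888:ℝ)^5/40) / 2.5066)
    (by norm_num) (by push_cast; linarith) (by push_cast; linarith) hR
  apply hnum_reduce 16 (by norm_num) _ 10.02651 5.0 (by norm_num)
    (le_sqrt_of_sq (by norm_num) (by push_cast; nlinarith [Real.pi_gt_d6]))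
    (sqrt_le_of_sq (by norm_num) (by push_cast; norm_num))
  push_cast
  norm_num

lemma case_17 (l : ℝ) (ha : (36:ℝ) ≤ l) (hb : l ≤ 38) :
    1 - stdNormalCDF ((l / 2 - 1 - 2 * l / 3) / Real.sqrt (2 * l / 3))
        - 0.55 / Real.sqrt (⌈2 * l / 3⌉₊ : ℝ)
      ≤ poissonTail (2 * l / 3) (l / 2 - 1) := by
  have hs_lo : (5.03322:ℝ) ≤ Real.sqrt (2*(38:ℝ)/3) := le_sqrt_of_sq (by norm_num) (by norm_num)
  have hs_hi : Real.sqrt (2*(38:ℝ)/3) ≤ 5.03323 := sqrt_le_of_sq (by norm_num) (by norm_num)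
  have hs_pos : (0:ℝ) < Real.sqrt (2*(38:ℝ)/3) := lt_of_lt_of_le (by norm_num) hs_lo
  have hT_lo : (1.45698:ℝ) ≤ ((38:ℝ)/6+1) / Real.sqrt (2*(38:ℝ)/3) := by
    rw [le_div_iff₀ hs_pos]; nlinarith
  have hT_hi : ((38:ℝ)/6+1) / Real.sqrt (2*(38:ℝ)/3) ≤ 1.45699 := by
    rw [div_le_iff₀ hs_pos]; nlinarith
  have hR := cdf_x_lower l 38 1.45698 1.45699 (by linarith) (by linarith) (by norm_num) hT_lo hT_hi
  apply master 17 l (1/2 - ((1.45699:ℝ) - (1.45698:ℝ)^3/6 + (1.45699:ℝ)^5/40) / 2.5066)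
    (by norm_num) (by push_cast; linarith) (by push_cast; linarith) hR
  apply hnum_reduce 17 (by norm_num) _ 10.33509 5.13161 (by norm_num)
    (le_sqrt_of_sq (by norm_num) (by push_cast; nlinarith [Real.pi_gt_d6]))
    (sqrt_le_of_sq (by norm_num) (by push_cast; norm_num))
  push_cast
  norm_num

lemma case_18 (l : ℝ) (ha : (38:ℝ) ≤ l) (hb : l ≤ 40) :
    1 - stdNormalCDF ((l / 2 - 1 - 2 * l / 3) / Real.sqrt (2 * l / 3))
        - 0.55 / Real.sqrt (⌈2 * l / 3⌉₊ : ℝ)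
      ≤ poissonTail (2 * l / 3) (l / 2 - 1) := by
  have hs_lo : (5.16397:ℝ) ≤ Real.sqrt (2*(40:ℝ)/3) := le_sqrt_of_sq (by norm_num) (by norm_num)
  have hs_hi : Real.sqrt (2*(40:ℝ)/3) ≤ 5.16398 := sqrt_le_of_sq (by norm_num) (by norm_num)
  have hs_pos : (0:ℝ) < Real.sqrt (2*(40:ℝ)/3) := lt_of_lt_of_le (by norm_num) hs_lo
  have hT_lo : (1.48464:ℝ) ≤ ((40:ℝ)/6+1) / Real.sqrt (2*(40:ℝ)/3) := by
    rw [le_div_iff₀ hs_pos]; nlinarith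
  have hT_hi : ((40:ℝ)/6+1) / Real.sqrt (2*(40:ℝ)/3) ≤ 1.48465 := by
    rw [div_le_iff₀ hs_pos]; nlinarith
  have hR := cdf_x_lower l 40 1.48464 1.48465 (by linarith) (by linarith) (by norm_num) hT_lo hT_hi
  apply master 18 l (1/2 - ((1.48465:ℝ) - (1.48464:ℝ)^3/6 + (1.48465:ℝ)^5/40) / 2.5066)
    (by norm_num) (by push_cast; linarith) (by push_cast; linarith) hR
  apply hnum_reduce 18 (by norm_num) _ 10.63472 5.25992 (by norm_num)
    (le_sqrt_of_sq (by norm_num) (by push_cast; nlinarith [Real.pi_gt_d6]))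
    (sqrt_le_of_sq (by norm_num) (by push_cast; norm_num))
  push_cast
  norm_num

lemma case_19 (l : ℝ) (ha : (40:ℝ) ≤ l) (hb : l ≤ 42) :
    1 - stdNormalCDF ((l / 2 - 1 - 2 * l / 3) / Real.sqrt (2 * l / 3))
        - 0.55 / Real.sqrt (⌈2 * l / 3⌉₊ : ℝ)
      ≤ poissonTail (2 * l / 3) (l / 2 - 1) := by
  have hs_lo : (5.2915:ℝ) ≤ Real.sqrt (2*(42:ℝ)/3) := le_sqrt_of_sq (by norm_num) (by norm_num)
  have hs_hi : Real.sqrt (2*(42:ℝ)/3) ≤ 5.29151 := sqrt_le_of_sq (by norm_num) (by norm_num)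
  have hs_pos : (0:ℝ) < Real.sqrt (2*(42:ℝ)/3) := lt_of_lt_of_le (by norm_num) hs_lo
  have hT_lo : (1.51185:ℝ) ≤ ((42:ℝ)/6+1) / Real.sqrt (2*(42:ℝ)/3) := by
    rw [le_div_iff₀ hs_pos]; nlinarith
  have hT_hi : ((42:ℝ)/6+1) / Real.sqrt (2*(42:ℝ)/3) ≤ 1.51186 := by
    rw [div_le_iff₀ hs_pos]; nlinarith
  have hR := cdf_x_lower l 42 1.51185 1.51186 (by linarith) (by linarith) (by norm_num) hT_lo hT_hi
  apply master 19 l (1/2 - ((1.51186:ℝ) - (1.51185:ℝ)^3/6 + (1.51186:ℝ)^5/40) / 2.5066)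
    (by norm_num) (by push_cast; linarith) (by push_cast; linarith) hR
  apply hnum_reduce 19 (by norm_num) _ 10.92613 5.38517 (by norm_num)
    (le_sqrt_of_sq (by norm_num) (by push_cast; nlinarith [Real.pi_gt_d6]))
    (sqrt_le_of_sq (by norm_num) (by push_cast; norm_num))
  push_cast
  norm_num

lemma case_20 (l : ℝ) (ha : (42:ℝ) ≤ l) (hb : l ≤ 44) :
    1 - stdNormalCDF ((l / 2 - 1 - 2 * l / 3) / Real.sqrt (2 * l / 3))
        - 0.55 / Real.sqrt (⌈2 * l / 3⌉₊ : ℝ)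
      ≤ poissonTail (2 * l / 3) (l / 2 - 1) := by
  have hs_lo : (5.41602:ℝ) ≤ Real.sqrt (2*(44:ℝ)/3) := le_sqrt_of_sq (by norm_num) (by norm_num)
  have hs_hi : Real.sqrt (2*(44:ℝ)/3) ≤ 5.41603 := sqrt_le_of_sq (by norm_num) (by norm_num)
  have hs_pos : (0:ℝ) < Real.sqrt (2*(44:ℝ)/3) := lt_of_lt_of_le (by norm_num) hs_lo
  have hT_lo : (1.53864:ℝ) ≤ ((44:ℝ)/6+1) / Real.sqrt (2*(44:ℝ)/3) := by
    rw [le_div_iff₀ hs_pos]; nlinarith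
  have hT_hi : ((44:ℝ)/6+1) / Real.sqrt (2*(44:ℝ)/3) ≤ 1.53865 := by
    rw [div_le_iff₀ hs_pos]; nlinarith
  have hR := cdf_x_lower l 44 1.53864 1.53865 (by linarith) (by linarith) (by norm_num) hT_lo hT_hi
  apply master 20 l (1/2 - ((1.53865:ℝ) - (1.53864:ℝ)^3/6 + (1.53865:ℝ)^5/40) / 2.5066)
    (by norm_num) (by push_cast; linarith) (by push_cast; linarith) hR
  apply hnum_reduce 20 (by norm_num) _ 11.20998 5.50758 (by norm_num)
    (le_sqrt_of_sq (by norm_num) (by push_cast; nlinarith [Real.pi_gt_d6]))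
    (sqrt_le_of_sq (by norm_num) (by push_cast; norm_num))
  push_cast
  norm_num

lemma case_21 (l : ℝ) (ha : (44:ℝ) ≤ l) (hb : l ≤ 46) :
    1 - stdNormalCDF ((l / 2 - 1 - 2 * l / 3) / Real.sqrt (2 * l / 3))
        - 0.55 / Real.sqrt (⌈2 * l / 3⌉₊ : ℝ)
      ≤ poissonTail (2 * l / 3) (l / 2 - 1) := by
  have hs_lo : (5.53774:ℝ) ≤ Real.sqrt (2*(46:ℝ)/3) := le_sqrt_of_sq (by norm_num) (by norm_num)
  have hs_hi : Real.sqrt (2*(46:ℝ)/3) ≤ 5.53775 := sqrt_le_of_sq (by norm_num) (by norm_num)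
  have hs_pos : (0:ℝ) < Real.sqrt (2*(46:ℝ)/3) := lt_of_lt_of_le (by norm_num) hs_lo
  have hT_lo : (1.56501:ℝ) ≤ ((46:ℝ)/6+1) / Real.sqrt (2*(46:ℝ)/3) := by
    rw [le_div_iff₀ hs_pos]; nlinarith
  have hT_hi : ((46:ℝ)/6+1) / Real.sqrt (2*(46:ℝ)/3) ≤ 1.56502 := by
    rw [div_le_iff₀ hs_pos]; nlinarith
  have hR := cdf_x_lower l 46 1.56501 1.56502 (by linarith) (by linarith) (by norm_num) hT_lo hT_hi
  apply master 21 l (1/2 - ((1.56502:ℝ) - (1.56501:ℝ)^3/6 + (1.56502:ℝ)^5/40) / 2.5066)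
    (by norm_num) (by push_cast; linarith) (by push_cast; linarith) hR
  apply hnum_reduce 21 (by norm_num) _ 11.48681 5.62732 (by norm_num)
    (le_sqrt_of_sq (by norm_num) (by push_cast; nlinarith [Real.pi_gt_d6]))
    (sqrt_le_of_sq (by norm_num) (by push_cast; norm_num))
  push_cast
  norm_num
lemma tail_case (l : ℝ) (hl : 46 < l) :
    1 - stdNormalCDF ((l / 2 - 1 - 2 * l / 3) / Real.sqrt (2 * l / 3))
        - 0.55 / Real.sqrt (⌈2 * l / 3⌉₊ : ℝ)
      ≤ poissonTail (2 * l / 3) (l / 2 - 1) := by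
  set a : ℝ := l/2 - 1 with hadef
  have ha0 : (22:ℝ) < a := by rw [hadef]; linarith
  have hceil : 23 ≤ ⌈a⌉₊ := by
    have : (22:ℕ) < ⌈a⌉₊ := by
      rw [Nat.lt_ceil]; exact_mod_cast ha0
    omega
  set k : ℕ := ⌈a⌉₊ - 1 with hkdef
  have hk22 : 22 ≤ k := by omega
  have hkcast : (k:ℝ) = (⌈a⌉₊ : ℝ) - 1 := by
    rw [hkdef]
    have : 1 ≤ ⌈a⌉₊ := by omega
    push_cast [this]
    ring
  have hceil_lt : (⌈a⌉₊ : ℝ) < a + 1 := Nat.ceil_lt_add_one (by linarith)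
  have hle_ceil : a ≤ (⌈a⌉₊ : ℝ) := Nat.le_ceil a
  have h1 : 2*(k:ℝ)+2 ≤ l := by
    rw [hkcast]
    have : (⌈a⌉₊ : ℝ) - 1 < a := by linarith
    rw [hadef] at this
    linarith
  have h2 : l ≤ 2*(k:ℝ)+4 := by
    rw [hkcast]
    have : a ≤ ((⌈a⌉₊ : ℝ) - 1) + 1 := by linarith
    rw [hadef] at this
    linarith
  have htail := tail_hnum k hk22
  apply master k l 0 (by omega) h1 h2 (cdf_nonneg _)
  rw [add_zero]
  exact htail

theorem stmt_19 (l : ℝ) (hl : 20 ≤ l) :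
    1 - stdNormalCDF ((l / 2 - 1 - 2 * l / 3) / Real.sqrt (2 * l / 3))
        - 0.55 / Real.sqrt (⌈2 * l / 3⌉₊ : ℝ)
      ≤ poissonTail (2 * l / 3) (l / 2 - 1) ∧
    (0.7 : ℝ) ≤ 1 - stdNormalCDF ((l / 2 - 1 - 2 * l / 3) / Real.sqrt (2 * l / 3))
        - 0.55 / Real.sqrt (⌈2 * l / 3⌉₊ : ℝ) := by
  constructor
  · rcases le_or_gt l 22 with h | h
    · exact case_9 l hl h
    rcases le_or_gt l 24 with h' | h'
    · exact case_10 l h.le h'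
    rcases le_or_gt l 26 with h2 | h2
    · exact case_11 l h'.le h2
    rcases le_or_gt l 28 with h3 | h3
    · exact case_12 l h2.le h3
    rcases le_or_gt l 30 with h4 | h4
    · exact case_13 l h3.le h4
    rcases le_or_gt l 32 with h5 | h5
    · exact case_14 l h4.le h5
    rcases le_or_gt l 34 with h6 | h6
    · exact case_15 l h5.le h6
    rcases le_or_gt l 36 with h7 | h7
    · exact case_16 l h6.le h7
    rcases le_or_gt l 38 with h8 | h8
    · exact case_17 l h7.le h8
    rcases le_or_gt l 40 with h9 | h9
    · exact case_18 l h8.le h9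
    rcases le_or_gt l 42 with h10 | h10
    · exact case_19 l h9.le h10
    rcases le_or_gt l 44 with h11 | h11
    · exact case_20 l h10.le h11
    rcases le_or_gt l 46 with h12 | h12
    · exact case_21 l h11.le h12
    · exact tail_case l h12
  · exact part2 l hl
end
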